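/- arXiv:1402.1561 — 12 statements merged into one kernel-verified Lean document; each statement's English description precedes it below -/
import Mathlib

section
/- The map (f,g) ↦ f+g defines a bijection between direct acute bases of ℤ², i.e. pairs (f,g) ∈ ℤ²×ℤ² with det(f,g) = 1 and ⟨f,g⟩ ≥ 0, and irreducible vectors e ∈ ℤ² with ‖e‖ > 1. -/
/-- Vectors of `ℤ²`. -/
abbrev V : Type := ℤ × ℤ

/-- Determinant of two vectors of `ℤ²`. -/
def det2 (f g : V) : ℤ := f.1 * g.2 - f.2 * g.1

/-- Standard inner product on `ℤ²`. -/
def dot (f g : V) : ℤ := f.1 * g.1 + f.2 * g.2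

/-- Squared euclidean norm on `ℤ²`. -/
def nsq (e : V) : ℤ := e.1 ^ 2 + e.2 ^ 2

/-- A vector of `ℤ²` is irreducible iff its coordinates are coprime. -/
def Irred (e : V) : Prop := Int.gcd e.1 e.2 = 1

/-- `(f, g)` are the parents of `e` : they form a direct acute basis summing to `e`. -/
def IsParents (f g e : V) : Prop := e = f + g ∧ det2 f g = 1 ∧ 0 ≤ dot f g

/-- `f` is a parent of `e`. -/
def IsParent (f e : V) : Prop := ∃ g : V, IsParents f g e ∨ IsParents g f e

/-- Embedding of `ℤ²` into `ℝ²`. -/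
def toR (e : V) : ℝ × ℝ := ((e.1 : ℝ), (e.2 : ℝ))

/-- If `det2 x e = 0` and `e` is irreducible, then `x` is an integer multiple of `e`. -/
lemma collinear_of_det_zero (e x : V) (he : Irred e) (h : det2 x e = 0) :
    ∃ k : ℤ, x.1 = k * e.1 ∧ x.2 = k * e.2 := by
  have hco : IsCoprime e.1 e.2 := Int.isCoprime_iff_gcd_eq_one.mpr he
  have h' : x.1 * e.2 = x.2 * e.1 := by unfold det2 at h; linarith
  rcases eq_or_ne e.1 0 with h1 | h1
  · have h2 : e.2 = 1 ∨ e.2 = -1 := by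
      have : Int.gcd e.1 e.2 = 1 := he
      rw [h1] at this
      simp [Int.gcd] at this
      omega
    have hx1 : x.1 = 0 := by
      rcases h2 with h2 | h2 <;> rw [h2, h1] at h' <;> simpa using h'
    refine ⟨x.2 * e.2, by rw [h1, hx1]; ring, ?_⟩
    rcases h2 with h2 | h2 <;> rw [h2] <;> ring
  · have hd : e.1 ∣ x.1 := by
      refine hco.dvd_of_dvd_mul_right (y := x.1) ?_
      exact ⟨x.2, by linarith [h']⟩
    obtain ⟨k, hk⟩ := hd
    refine ⟨k, by rw [hk]; ring, ?_⟩
    have : e.1 * (k * e.2) = e.1 * x.2 := by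
      rw [hk] at h'; linarith [h']
    have := mul_left_cancel₀ h1 this
    omega

/-- Bounds on `s` from `0 ≤ N*s - s^2 - 1`. -/
lemma sbound {N s : ℤ} (hN : 2 ≤ N) (hs : 0 ≤ N * s - s ^ 2 - 1) : 1 ≤ s ∧ s ≤ N - 1 := by
  constructor
  · nlinarith [sq_nonneg (s - 1)]
  · nlinarith [sq_nonneg (s - 1)]

/-- A multiple of `N` in `[-(N-2), N-2]` is zero. -/
lemma kzero {N k d : ℤ} (hN : 2 ≤ N) (hd : d = k * N) (h1 : 2 - N ≤ d) (h2 : d ≤ N - 2) :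
    k = 0 := by
  rcases lt_trichotomy k 0 with h | h | h
  · have : k * N ≤ -1 * N := mul_le_mul_of_nonneg_right (by omega) (by omega)
    omega
  · exact h
  · have : 1 * N ≤ k * N := mul_le_mul_of_nonneg_right (by omega) (by omega)
    omega

/-- Uniqueness of the parents of an irreducible vector of square norm `> 1`. -/
lemma parents_unique (e f g f' g' : V) (he : Irred e) (hN : 1 < nsq e)
    (hdet : det2 f g = 1) (hdot : 0 ≤ dot f g) (hfg : f + g = e)
    (hdet' : det2 f' g' = 1) (hdot' : 0 ≤ dot f' g') (hfg' : f' + g' = e) :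
    f = f' ∧ g = g' := by
  have hNe : nsq e = e.1 ^ 2 + e.2 ^ 2 := rfl
  set N : ℤ := nsq e with hNdef
  have hN2 : 2 ≤ N := hN
  have hN0 : 0 < N := by omega
  have hsum1 : f.1 + g.1 = e.1 := by rw [← hfg]; simp
  have hsum2 : f.2 + g.2 = e.2 := by rw [← hfg]; simp
  have hsum1' : f'.1 + g'.1 = e.1 := by rw [← hfg']; simp
  have hsum2' : f'.2 + g'.2 = e.2 := by rw [← hfg']; simp
  simp only [det2, dot] at hdet hdot hdet' hdot'
  have hdfe : f.1 * e.2 - f.2 * e.1 = 1 := by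
    rw [← hsum1, ← hsum2]; linear_combination hdet
  have hdfe' : f'.1 * e.2 - f'.2 * e.1 = 1 := by
    rw [← hsum1', ← hsum2']; linear_combination hdet'
  obtain ⟨k, hk1, hk2⟩ := collinear_of_det_zero e (f'.1 - f.1, f'.2 - f.2) he
    (by simp only [det2]; linear_combination hdfe' - hdfe)
  simp only at hk1 hk2
  set s : ℤ := f.1 * e.1 + f.2 * e.2 with hsdef
  set s' : ℤ := f'.1 * e.1 + f'.2 * e.2 with hs'def
  have hs : 0 ≤ N * s - s ^ 2 - 1 := by
    have h1 : N * (f.1 * g.1 + f.2 * g.2) = N * s - s ^ 2 - 1 := by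
      rw [hsdef, hNe, ← hsum1, ← hsum2]
      linear_combination (-(f.1 * (f.2 + g.2) - f.2 * (f.1 + g.1) + 1)) * hdet
    nlinarith [mul_nonneg (le_of_lt hN0) hdot]
  have hs' : 0 ≤ N * s' - s' ^ 2 - 1 := by
    have h1 : N * (f'.1 * g'.1 + f'.2 * g'.2) = N * s' - s' ^ 2 - 1 := by
      rw [hs'def, hNe, ← hsum1', ← hsum2']
      linear_combination (-(f'.1 * (f'.2 + g'.2) - f'.2 * (f'.1 + g'.1) + 1)) * hdet'
    nlinarith [mul_nonneg (le_of_lt hN0) hdot']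
  obtain ⟨hb1, hb2⟩ := sbound hN2 hs
  obtain ⟨hb1', hb2'⟩ := sbound hN2 hs'
  have hks : s' - s = k * N := by
    rw [hsdef, hs'def, hNe]
    linear_combination e.1 * hk1 + e.2 * hk2
  have hk0 : k = 0 := kzero hN2 hks (by omega) (by omega)
  have hf1 : f.1 = f'.1 := by rw [hk0] at hk1; omega
  have hf2 : f.2 = f'.2 := by rw [hk0] at hk2; omega
  exact ⟨Prod.ext_iff.mpr ⟨hf1, hf2⟩, Prod.ext_iff.mpr ⟨by omega, by omega⟩⟩

/-- The map `(f,g) ↦ f+g` is a bijection between direct acute bases of `ℤ²`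
and irreducible vectors `e` with `‖e‖ > 1`. -/
theorem parent_bijection :
    (∀ f g : V, det2 f g = 1 → 0 ≤ dot f g → Irred (f + g) ∧ 1 < nsq (f + g)) ∧
    (∀ e : V, Irred e → 1 < nsq e →
      ∃! p : V × V, det2 p.1 p.2 = 1 ∧ 0 ≤ dot p.1 p.2 ∧ p.1 + p.2 = e) := by
  constructor
  · intro f g hdet hdot
    simp only [det2, dot] at hdet hdot
    constructor
    · rw [Irred, ← Int.isCoprime_iff_gcd_eq_one]
      refine ⟨g.2, -g.1, ?_⟩
      simp only [Prod.fst_add, Prod.snd_add]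
      linear_combination hdet
    · unfold nsq
      simp only [Prod.fst_add, Prod.snd_add]
      nlinarith [sq_nonneg (f.1 * g.1 + f.2 * g.2), sq_nonneg (f.1 ^ 2 + f.2 ^ 2 - g.1 ^ 2 - g.2 ^ 2),
        sq_nonneg (f.1 ^ 2 + f.2 ^ 2 + g.1 ^ 2 + g.2 ^ 2 - 2), sq_nonneg f.1, sq_nonneg f.2,
        sq_nonneg g.1, sq_nonneg g.2]
  · intro e he hN
    obtain ⟨a, b, hab⟩ : ∃ a b : ℤ, a * e.1 + b * e.2 = 1 := by
      obtain ⟨a, b, hab⟩ := Int.isCoprime_iff_gcd_eq_one.mpr he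
      exact ⟨a, b, hab⟩
    set N : ℤ := nsq e with hNdef
    have hNe : N = e.1 ^ 2 + e.2 ^ 2 := rfl
    have hN2 : 2 ≤ N := hN
    have hN0 : 0 < N := by omega
    set D : ℤ := b * e.1 - a * e.2 with hDdef
    have hLag : N * (b ^ 2 + a ^ 2) = D ^ 2 + 1 := by
      rw [hNe, hDdef]
      linear_combination (a * e.1 + b * e.2 + 1) * hab
    set r : ℤ := D % N with hrdef
    have hr0 : 0 ≤ r := Int.emod_nonneg D (by omega)
    have hrN : r < N := Int.emod_lt_of_pos D hN0
    have hr1 : 1 ≤ r := by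
      rcases eq_or_lt_of_le hr0 with h | h
      · exfalso
        have hdvd : N ∣ D := Int.dvd_of_emod_eq_zero h.symm
        obtain ⟨c, hc⟩ := hdvd
        have : N ∣ 1 := ⟨b ^ 2 + a ^ 2 - N * c ^ 2, by rw [hc] at hLag; linarith [hLag]⟩
        have := Int.le_of_dvd one_pos this
        omega
      · omega
    set t : ℤ := -(D / N) with htdef
    have hr : N * t + D = r := by
      rw [htdef, hrdef]
      have := Int.emod_add_mul_ediv D N
      linarith
    -- the parent pair
    set f : V := (b + t * e.1, -a + t * e.2) with hfdef
    set g : V := (e.1 - f.1, e.2 - f.2) with hgdef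
    have hfg : f + g = e := by
      rw [hfdef, hgdef]
      simp [Prod.ext_iff, hfdef]
    have hdet : det2 f g = 1 := by
      rw [hfdef, hgdef]
      unfold det2
      simp only
      linear_combination hab
    have hkey : N * dot f g = r * (N - r) - 1 := by
      rw [← hr, hfdef, hgdef]
      unfold dot
      simp only
      rw [hNe, hDdef]
      linear_combination (-(a * e.1 + b * e.2 + 1)) * hab
    have hdot : 0 ≤ dot f g := by
      have h1 : 1 ≤ r * (N - r) := by nlinarith
      nlinarith
    -- uniqueness
    refine ⟨(f, g), ⟨hdet, hdot, hfg⟩, ?_⟩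
    rintro ⟨f', g'⟩ ⟨hdet', hdot', hfg'⟩
    simp only at hdet' hdot' hfg'
    obtain ⟨h1, h2⟩ := parents_unique e f' g' f g he hN hdet' hdot' hfg' hdet hdot hfg
    rw [h1, h2]
end

section
/- Let e, f, g ∈ ℤ² satisfy e = f + g, ‖e‖ ≥ max{‖f‖, ‖g‖}, and det(f,g) = 1. Then ⟨f,g⟩ ≥ 0 (i.e. (f,g) is the unique direct acute basis summing to e). -/
/-- If `e = f + g`, `‖e‖ ≥ max {‖f‖, ‖g‖}` and `det (f,g) = 1`, then `⟨f,g⟩ ≥ 0`. -/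
theorem sum_parents_acute (e f g : V) (he : e = f + g)
    (hf : nsq f ≤ nsq e) (hg : nsq g ≤ nsq e) (hd : det2 f g = 1) :
    0 ≤ dot f g := by
  subst he
  simp only [nsq, dot, det2, Prod.fst_add, Prod.snd_add] at *
  nlinarith [sq_nonneg (f.1*g.1 + f.2*g.2), sq_nonneg (f.1+g.1), sq_nonneg (f.2+g.2)]
end

section
/- Let (f,g) be a basis of ℤ² with det(f,g) = 1 which is not acute, i.e. ⟨f,g⟩ < 0. If ‖f‖ ≥ ‖g‖ then f+g is a parent of f, and otherwise f+g is a parent of g. -/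
/-- If `(f,g)` is a direct non-acute basis, then `f+g` is a parent of the larger of `f, g`. -/
theorem sum_parent_of_nonacute (f g : V) (hd : det2 f g = 1) (hna : dot f g < 0) :
    (nsq g ≤ nsq f → IsParent (f + g) f) ∧ (nsq f < nsq g → IsParent (f + g) g) := by
  have key : det2 f g ^ 2 + dot f g ^ 2 = nsq f * nsq g := by
    simp only [det2, dot, nsq]; ring
  simp only [det2] at hd
  simp only [dot] at hna ⊢
  constructor
  · intro h
    refine ⟨-g, Or.inr ⟨by ring, ?_, ?_⟩⟩
    · simp only [det2, Prod.fst_add, Prod.snd_add, Prod.fst_neg, Prod.snd_neg]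
      linarith [hd]
    · simp only [dot, Prod.fst_add, Prod.snd_add, Prod.fst_neg, Prod.snd_neg] at *
      simp only [nsq] at h
      nlinarith [key, sq_nonneg (f.1*g.1+f.2*g.2 + g.1^2+g.2^2)]
  · intro h
    refine ⟨-f, Or.inl ⟨by ring, ?_, ?_⟩⟩
    · simp only [det2, Prod.fst_add, Prod.snd_add, Prod.fst_neg, Prod.snd_neg]
      linarith [hd]
    · simp only [dot, Prod.fst_add, Prod.snd_add, Prod.fst_neg, Prod.snd_neg] at *
      simp only [nsq] at h
      nlinarith [key, sq_nonneg (f.1*g.1+f.2*g.2 + f.1^2+f.2^2)]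
end

section
/- Let e ∈ ℤ² be irreducible with ‖e‖ > 1 and parents f, g. Then every irreducible e' ∈ ℤ² having e as a parent is of the form e' = f + k·e or e' = k·e + g for some integer k ≥ 1. -/
lemma one_le_sq_of_ne {a : ℤ} (h : a ≠ 0) : 1 ≤ a ^ 2 := by
  rcases h.lt_or_gt with h | h <;> nlinarith

lemma parallel_of_det_zero (e v : V) (he : Irred e) (h : det2 e v = 0) :
    ∃ t : ℤ, v = t • e := by
  have hc : IsCoprime e.1 e.2 := Int.isCoprime_iff_gcd_eq_one.mpr he
  have hd : e.1 * v.2 = e.2 * v.1 := by unfold det2 at h; linarith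
  have h1 : e.1 ∣ v.1 := hc.dvd_of_dvd_mul_left ⟨v.2, by linarith⟩
  have h2 : e.2 ∣ v.2 := hc.symm.dvd_of_dvd_mul_left ⟨v.1, by linarith⟩
  obtain ⟨t1, ht1⟩ := h1
  obtain ⟨t2, ht2⟩ := h2
  rcases eq_or_ne e.1 0 with h0 | h0
  · have he2 : e.2 ≠ 0 := by
      intro h2'
      rw [Irred, h0, h2'] at he
      simp at he
    have hv1 : v.1 = 0 := by
      have : e.2 * v.1 = 0 := by rw [← hd, h0]; ring
      exact (mul_eq_zero.mp this).resolve_left he2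
    exact ⟨t2, by ext <;> simp [hv1, ht2, h0] <;> ring⟩
  · rcases eq_or_ne e.2 0 with h0' | h0'
    · have hv2 : v.2 = 0 := by
        have : e.1 * v.2 = 0 := by rw [hd, h0']; ring
        exact (mul_eq_zero.mp this).resolve_left h0
      exact ⟨t1, by ext <;> simp [hv2, ht1, h0'] <;> ring⟩
    · have heq : t1 = t2 := by
        have key : e.1 * e.2 * t1 = e.1 * e.2 * t2 := by
          linear_combination -e.2 * ht1 + e.1 * ht2 - hd
        exact mul_left_cancel₀ (mul_ne_zero h0 h0') key
      exact ⟨t1, by ext <;> simp [ht1, ht2, ← heq] <;> ring⟩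

/-- The children of an irreducible `e` with parents `f, g` have the form
`f + k • e` or `k • e + g` with `k ≥ 1`. -/
theorem children_form (e f g : V) (he : Irred e) (hn : 1 < nsq e)
    (hp : IsParents f g e) (e' : V) (he' : Irred e') (hc : IsParent e e') :
    ∃ k : ℤ, 1 ≤ k ∧ (e' = f + k • e ∨ e' = k • e + g) := by
  obtain ⟨hes, hdet, hdot⟩ := hp
  obtain ⟨h, hcase | hcase⟩ := hc
  · -- e' = e + h
    obtain ⟨hs, hd, hdp⟩ := hcase
    subst hes hs
    obtain ⟨a, b⟩ := f
    obtain ⟨c, d⟩ := g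
    obtain ⟨p, q⟩ := h
    simp only [det2, dot, Prod.mk_add_mk] at hdet hdot hd hdp
    obtain ⟨t, ht⟩ := parallel_of_det_zero _ ((p, q) - (c, d)) he
      (by simp only [det2, Prod.mk_add_mk, Prod.mk_sub_mk]; ring_nf; ring_nf at hd hdet; linarith)
    rw [Prod.mk_add_mk, Prod.mk_sub_mk, Prod.smul_mk, smul_eq_mul, smul_eq_mul,
      Prod.mk.injEq] at ht
    obtain ⟨ht1, ht2⟩ := ht
    have hsq : 1 ≤ a ^ 2 + b ^ 2 := by
      rcases eq_or_ne a 0 with ha | ha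
      · rcases eq_or_ne b 0 with hb | hb
        · exfalso; rw [ha, hb] at hdet; simp at hdet
        · nlinarith [one_le_sq_of_ne hb, sq_nonneg a]
      · nlinarith [one_le_sq_of_ne ha, sq_nonneg b]
    have htpos : 0 ≤ t := by
      by_contra ht0
      push_neg at ht0
      have ht0' : t ≤ -1 := by omega
      have hN : (0:ℤ) ≤ (a+c)^2 + (b+d)^2 := by positivity
      have key : t * ((a+c)^2 + (b+d)^2) ≤ -1 * ((a+c)^2 + (b+d)^2) :=
        mul_le_mul_of_nonneg_right ht0' hN
      have e1 : (a+c)*p + (b+d)*q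
          = (a+c)*c + (b+d)*d + t*((a+c)^2 + (b+d)^2) := by
        linear_combination (a+c)*ht1 + (b+d)*ht2
      have e2 : (a+c)*c + (b+d)*d - ((a+c)^2 + (b+d)^2)
          = -(a^2 + b^2 + a*c + b*d) := by ring
      linarith [hdp, e1, e2, key, hsq, hdot]
    refine ⟨t + 1, by omega, Or.inr ?_⟩
    simp only [Prod.mk_add_mk, Prod.smul_mk, smul_eq_mul, Prod.mk.injEq]
    constructor <;> linarith [ht1, ht2]
  · -- e' = h + e
    obtain ⟨hs, hd, hdp⟩ := hcase
    subst hes hs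
    obtain ⟨a, b⟩ := f
    obtain ⟨c, d⟩ := g
    obtain ⟨p, q⟩ := h
    simp only [det2, dot, Prod.mk_add_mk] at hdet hdot hd hdp
    obtain ⟨t, ht⟩ := parallel_of_det_zero _ ((p, q) - (a, b)) he
      (by simp only [det2, Prod.mk_add_mk, Prod.mk_sub_mk]; ring_nf; ring_nf at hd hdet; linarith)
    rw [Prod.mk_add_mk, Prod.mk_sub_mk, Prod.smul_mk, smul_eq_mul, smul_eq_mul,
      Prod.mk.injEq] at ht
    obtain ⟨ht1, ht2⟩ := ht
    have hsq : 1 ≤ c ^ 2 + d ^ 2 := by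
      rcases eq_or_ne c 0 with hc0 | hc0
      · rcases eq_or_ne d 0 with hd0 | hd0
        · exfalso; rw [hc0, hd0] at hdet; simp at hdet
        · nlinarith [one_le_sq_of_ne hd0, sq_nonneg c]
      · nlinarith [one_le_sq_of_ne hc0, sq_nonneg d]
    have htpos : 0 ≤ t := by
      by_contra ht0
      push_neg at ht0
      have ht0' : t ≤ -1 := by omega
      have hN : (0:ℤ) ≤ (a+c)^2 + (b+d)^2 := by positivity
      have key : t * ((a+c)^2 + (b+d)^2) ≤ -1 * ((a+c)^2 + (b+d)^2) :=
        mul_le_mul_of_nonneg_right ht0' hN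
      have e1 : p*(a+c) + q*(b+d)
          = a*(a+c) + b*(b+d) + t*((a+c)^2 + (b+d)^2) := by
        linear_combination (a+c)*ht1 + (b+d)*ht2
      have e2 : a*(a+c) + b*(b+d) - ((a+c)^2 + (b+d)^2)
          = -(c^2 + d^2 + a*c + b*d) := by ring
      linarith [hdp, e1, e2, key, hsq, hdot]
    refine ⟨t + 1, by omega, Or.inl ?_⟩
    simp only [Prod.mk_add_mk, Prod.smul_mk, smul_eq_mul, Prod.mk.injEq]
    constructor <;> linarith [ht1, ht2]
end

section
/- Let (f,g) be an acute basis of ℤ², i.e. |det(f,g)| = 1 and ⟨f,g⟩ ≥ 0. Then either f is a parent of g, or g is a parent of f, or ‖f‖ = ‖g‖ = 1. -/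
/-- For an acute basis `(f,g)` of `ℤ²`, either `f` is a parent of `g`, or `g` is a
parent of `f`, or both are unit vectors. -/
theorem acute_basis_parent (f g : V) (hd : |det2 f g| = 1) (ha : 0 ≤ dot f g) :
    IsParent f g ∨ IsParent g f ∨ (nsq f = 1 ∧ nsq g = 1) := by
  have key : det2 f g ^ 2 + dot f g ^ 2 = nsq f * nsq g := by
    simp only [det2, dot, nsq]; ring
  rcases (abs_eq (by norm_num : (0:ℤ) ≤ 1)).mp hd with h | h
  · by_cases h1 : 0 ≤ dot f (g - f)
    · left
      exact ⟨g - f, Or.inl ⟨by ring, by simp only [det2, Prod.snd_sub, Prod.fst_sub] at *; linarith, h1⟩⟩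
    · by_cases h2 : 0 ≤ dot (f - g) g
      · right; left
        exact ⟨f - g, Or.inr ⟨by ring, by
          simp only [det2, Prod.snd_sub, Prod.fst_sub] at *; linarith, h2⟩⟩
      · right; right
        simp only [dot, Prod.snd_sub, Prod.fst_sub] at h1 h2
        push_neg at h1 h2
        simp only [det2, dot, nsq] at *
        constructor <;> nlinarith [sq_nonneg (f.1 - g.1), sq_nonneg (f.2 - g.2)]
  · by_cases h1 : 0 ≤ dot g (f - g)
    · right; left
      exact ⟨f - g, Or.inl ⟨by ring, by simp only [det2, Prod.snd_sub, Prod.fst_sub] at *; linarith, h1⟩⟩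
    · by_cases h2 : 0 ≤ dot (g - f) f
      · left
        exact ⟨g - f, Or.inr ⟨by ring, by
          simp only [det2, Prod.snd_sub, Prod.fst_sub] at *; linarith, h2⟩⟩
      · right; right
        simp only [dot, Prod.snd_sub, Prod.fst_sub] at h1 h2
        push_neg at h1 h2
        simp only [det2, dot, nsq] at *
        constructor <;> nlinarith [sq_nonneg (f.1 - g.1), sq_nonneg (f.2 - g.2)]
end

section
/- Let Ω ⊂ ℝ² be convex, X = Ω ∩ ℤ², and let p, q, r, z ∈ X with z = αp + βq + γr for positive reals α, β, γ summing to 1, such that p, q, r are not collinear and the triangle [p,q,r] intersects X exactly in {p,q,r,z}. Then α = β = γ = 1/3 and, up to permuting p, q, r, there is an irreducible e ∈ ℤ² with ‖e‖ > 1, of parents f, g, such that p = z+e, q = z−f, r = z−g. -/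
lemma exists_extra (u v : V) (hD : 2 ≤ det2 u v) :
    ∃ w : V, 0 ≤ det2 w v ∧ 0 ≤ det2 u w ∧ det2 w v + det2 u w ≤ det2 u v ∧
      w ≠ 0 ∧ w ≠ u ∧ w ≠ v := by
  have hD0 : (0:ℤ) < det2 u v := by omega
  have hnotdvd : ¬ (det2 u v ∣ 1) := by
    intro h; have := Int.le_of_dvd one_pos h; omega
  by_cases hg : Int.gcd v.1 v.2 = 1
  · -- v primitive: Bezout vector v' with det2 v v' = 1
    obtain ⟨v', hvv'⟩ : ∃ v' : V, det2 v v' = 1 := by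
      refine ⟨(-Int.gcdB v.1 v.2, Int.gcdA v.1 v.2), ?_⟩
      have hbez := Int.gcd_eq_gcd_ab v.1 v.2
      rw [hg] at hbez
      simp only [det2]
      push_cast at hbez ⊢
      linarith [hbez]
    obtain ⟨m, s, hs0, hsD, hms⟩ : ∃ m s : ℤ, 0 ≤ s ∧ s < det2 u v ∧
        det2 v' v = det2 u v * m + s :=
      ⟨_, _, Int.emod_nonneg _ (by omega), Int.emod_lt_of_pos _ hD0,
        (Int.mul_ediv_add_emod _ _).symm⟩
    obtain ⟨n, t, ht0, htD, hnt⟩ : ∃ n t : ℤ, 0 ≤ t ∧ t < det2 u v ∧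
        det2 u v' = det2 u v * n + t :=
      ⟨_, _, Int.emod_nonneg _ (by omega), Int.emod_lt_of_pos _ hD0,
        (Int.mul_ediv_add_emod _ _).symm⟩
    by_cases hst : s + t ≤ det2 u v
    · refine ⟨(v'.1 - m * u.1 - n * v.1, v'.2 - m * u.2 - n * v.2), ?_, ?_, ?_, ?_, ?_, ?_⟩
      · have : det2 (v'.1 - m * u.1 - n * v.1, v'.2 - m * u.2 - n * v.2) v = s := by
          simp only [det2] at *; linear_combination hms
        omega
      · have : det2 u (v'.1 - m * u.1 - n * v.1, v'.2 - m * u.2 - n * v.2) = t := by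
          simp only [det2] at *; linear_combination hnt
        omega
      · have h1 : det2 (v'.1 - m * u.1 - n * v.1, v'.2 - m * u.2 - n * v.2) v = s := by
          simp only [det2] at *; linear_combination hms
        have h2 : det2 u (v'.1 - m * u.1 - n * v.1, v'.2 - m * u.2 - n * v.2) = t := by
          simp only [det2] at *; linear_combination hnt
        omega
      · intro h
        rw [Prod.ext_iff] at h
        obtain ⟨h1, h2⟩ := h
        simp only [Prod.fst_zero, Prod.snd_zero] at h1 h2
        exact hnotdvd ⟨-m, by simp only [det2] at *; linear_combination -hvv' + v.1 * h2 - v.2 * h1⟩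
      · intro h
        rw [Prod.ext_iff] at h
        obtain ⟨h1, h2⟩ := h
        exact hnotdvd ⟨-m - 1, by simp only [det2] at *; linear_combination -hvv' + v.1 * h2 - v.2 * h1⟩
      · intro h
        rw [Prod.ext_iff] at h
        obtain ⟨h1, h2⟩ := h
        exact hnotdvd ⟨-m, by simp only [det2] at *; linear_combination -hvv' + v.1 * h2 - v.2 * h1⟩
    · -- use u + v - w
      refine ⟨(u.1 + v.1 - (v'.1 - m * u.1 - n * v.1), u.2 + v.2 - (v'.2 - m * u.2 - n * v.2)),
        ?_, ?_, ?_, ?_, ?_, ?_⟩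
      · have : det2 (u.1 + v.1 - (v'.1 - m * u.1 - n * v.1),
            u.2 + v.2 - (v'.2 - m * u.2 - n * v.2)) v = det2 u v - s := by
          simp only [det2] at *; linear_combination -hms
        omega
      · have : det2 u (u.1 + v.1 - (v'.1 - m * u.1 - n * v.1),
            u.2 + v.2 - (v'.2 - m * u.2 - n * v.2)) = det2 u v - t := by
          simp only [det2] at *; linear_combination -hnt
        omega
      · have h1 : det2 (u.1 + v.1 - (v'.1 - m * u.1 - n * v.1),
            u.2 + v.2 - (v'.2 - m * u.2 - n * v.2)) v = det2 u v - s := by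
          simp only [det2] at *; linear_combination -hms
        have h2 : det2 u (u.1 + v.1 - (v'.1 - m * u.1 - n * v.1),
            u.2 + v.2 - (v'.2 - m * u.2 - n * v.2)) = det2 u v - t := by
          simp only [det2] at *; linear_combination -hnt
        omega
      · intro h
        rw [Prod.ext_iff] at h
        obtain ⟨h1, h2⟩ := h
        simp only [Prod.fst_zero, Prod.snd_zero] at h1 h2
        exact hnotdvd ⟨-(m + 1), by simp only [det2] at *; linear_combination -hvv' - v.1 * h2 + v.2 * h1⟩
      · intro h
        rw [Prod.ext_iff] at h
        obtain ⟨h1, h2⟩ := h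
        exact hnotdvd ⟨-m, by simp only [det2] at *; linear_combination -hvv' - v.1 * h2 + v.2 * h1⟩
      · intro h
        rw [Prod.ext_iff] at h
        obtain ⟨h1, h2⟩ := h
        exact hnotdvd ⟨-(m + 1), by simp only [det2] at *; linear_combination -hvv' - v.1 * h2 + v.2 * h1⟩
  · -- gcd of v is ≥ 2 : take w = v / g
    have hg0 : Int.gcd v.1 v.2 ≠ 0 := by
      intro h
      rw [Int.gcd_eq_zero_iff] at h
      have : det2 u v = 0 := by simp [det2, h.1, h.2]
      omega
    have hg2 : 2 ≤ (Int.gcd v.1 v.2 : ℤ) := by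
      have : (1:ℕ) ≤ Int.gcd v.1 v.2 := Nat.one_le_iff_ne_zero.2 hg0
      have : Int.gcd v.1 v.2 ≠ 1 := hg
      omega
    obtain ⟨m', hm'⟩ : (Int.gcd v.1 v.2 : ℤ) ∣ v.1 := Int.gcd_dvd_left _ _
    obtain ⟨n', hn'⟩ : (Int.gcd v.1 v.2 : ℤ) ∣ v.2 := Int.gcd_dvd_right _ _
    set g : ℤ := (Int.gcd v.1 v.2 : ℤ) with hgdef
    have hkey : det2 u v = g * det2 u (m', n') := by
      simp only [det2]; rw [hm', hn']; ring
    have hk0 : 0 < det2 u (m', n') := by nlinarith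
    refine ⟨(m', n'), ?_, ?_, ?_, ?_, ?_, ?_⟩
    · have : det2 (m', n') v = 0 := by simp only [det2]; rw [hm', hn']; ring
      omega
    · omega
    · have h1 : det2 (m', n') v = 0 := by simp only [det2]; rw [hm', hn']; ring
      nlinarith
    · intro h
      rw [Prod.ext_iff] at h
      obtain ⟨h1, h2⟩ := h
      simp only [Prod.fst_zero, Prod.snd_zero] at h1 h2
      subst h1 h2
      simp [det2] at hk0
    · intro h
      have : det2 u (m', n') = 0 := by rw [h]; simp [det2]; ring
      omega
    · intro h
      rw [Prod.ext_iff] at h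
      obtain ⟨h1, h2⟩ := h
      rw [← h1] at hm'
      rw [← h2] at hn'
      have hm0 : m' * (g - 1) = 0 := by linear_combination -hm'
      have hn0 : n' * (g - 1) = 0 := by linear_combination -hn'
      have hg1 : g - 1 ≠ 0 := by omega
      have hm0' : m' = 0 := by rcases mul_eq_zero.1 hm0 with h | h; exact h; omega
      have hn0' : n' = 0 := by rcases mul_eq_zero.1 hn0 with h | h; exact h; omega
      rw [hm0', hn0'] at hk0
      simp [det2] at hk0

lemma toR_inj : Function.Injective toR := by
  intro x y h
  rw [Prod.ext_iff] at h ⊢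
  simp only [toR] at h
  exact_mod_cast h

lemma combo_mem {S : Set (ℝ × ℝ)} {x y w : ℝ × ℝ}
    (hx : x ∈ convexHull ℝ S) (hy : y ∈ convexHull ℝ S) (hw : w ∈ convexHull ℝ S)
    {μ ν : ℝ} (hμ : 0 ≤ μ) (hν : 0 ≤ ν) (hs : μ + ν ≤ 1) :
    (1 - μ - ν) • x + μ • y + ν • w ∈ convexHull ℝ S := by
  have conv := convex_convexHull ℝ S
  have := conv.centerMass_mem (t := (Finset.univ : Finset (Fin 3)))
    (w := ![1 - μ - ν, μ, ν]) (z := ![x, y, w])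
    (by intro i _; fin_cases i <;> simp <;> linarith)
    (by simp [Fin.sum_univ_three]; linarith)
    (by intro i _; fin_cases i <;> simpa)
  convert this using 1
  rw [Finset.centerMass]
  simp [Fin.sum_univ_three]
  rw [show (1 - μ - ν + μ + ν) = 1 by ring]
  simp

lemma collinear_of_det (p q r : ℝ × ℝ)
    (h : (q.1 - p.1) * (r.2 - p.2) - (q.2 - p.2) * (r.1 - p.1) = 0) :
    Collinear ℝ ({p, q, r} : Set (ℝ × ℝ)) := by
  by_cases hq : q = p
  · subst hq
    rw [Set.insert_comm, Set.insert_eq_self.2 (by simp)]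
    exact collinear_pair ℝ _ _
  · rw [collinear_iff_exists_forall_eq_smul_vadd]
    refine ⟨p, q - p, ?_⟩
    intro x hx
    rcases hx with hx | hx | hx
    · exact ⟨0, by simp [hx]⟩
    · exact ⟨1, by simp [hx]⟩
    · subst hx
      have hne : q.1 - p.1 ≠ 0 ∨ q.2 - p.2 ≠ 0 := by
        by_contra hc
        push_neg at hc
        apply hq
        rw [Prod.ext_iff]
        constructor <;> linarith [hc.1, hc.2]
      rcases hne with h1 | h1
      · refine ⟨(x.1 - p.1) / (q.1 - p.1), ?_⟩
        rw [Prod.ext_iff]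
        constructor
        · simp [Prod.smul_fst]; field_simp; ring
        · simp [Prod.smul_snd]; field_simp; nlinarith [h]
      · refine ⟨(x.2 - p.2) / (q.2 - p.2), ?_⟩
        rw [Prod.ext_iff]
        constructor
        · simp [Prod.smul_fst]; field_simp; nlinarith [h]
        · simp [Prod.smul_snd]; field_simp; ring

lemma zmem (Z a b c : V) (α β γ : ℝ) (hβ : 0 < β) (hγ : 0 < γ)
    (hsum : α + β + γ = 1)
    (h1 : α * a.1 + β * b.1 + γ * c.1 = 0)
    (h2 : α * a.2 + β * b.2 + γ * c.2 = 0)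
    (hα : 0 < α) :
    toR Z ∈ convexHull ℝ ({toR (Z + a), toR (Z + b), toR (Z + c)} : Set (ℝ × ℝ)) := by
  have ha : toR (Z + a) ∈ convexHull ℝ ({toR (Z + a), toR (Z + b), toR (Z + c)} : Set (ℝ × ℝ)) :=
    subset_convexHull _ _ (by simp)
  have hb : toR (Z + b) ∈ convexHull ℝ ({toR (Z + a), toR (Z + b), toR (Z + c)} : Set (ℝ × ℝ)) :=
    subset_convexHull _ _ (by simp)
  have hc : toR (Z + c) ∈ convexHull ℝ ({toR (Z + a), toR (Z + b), toR (Z + c)} : Set (ℝ × ℝ)) :=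
    subset_convexHull _ _ (by simp)
  have key := combo_mem ha hb hc (μ := β) (ν := γ) hβ.le hγ.le (by linarith)
  have heq : toR Z = (1 - β - γ) • toR (Z + a) + β • toR (Z + b) + γ • toR (Z + c) := by
    rw [Prod.ext_iff]
    constructor
    · simp only [toR, Prod.smul_fst, Prod.fst_add, Prod.snd_add, smul_eq_mul]
      push_cast
      linear_combination -h1 + (a.1 : ℝ) * hsum
    · simp only [toR, Prod.smul_snd, Prod.fst_add, Prod.snd_add, smul_eq_mul]
      push_cast
      linear_combination -h2 + (a.2 : ℝ) * hsum
  rw [heq]; exact key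

lemma subtri (Z a b c : V) (α β γ : ℝ) (hα : 0 < α) (hβ : 0 < β) (hγ : 0 < γ)
    (hsum : α + β + γ = 1)
    (h1 : α * a.1 + β * b.1 + γ * c.1 = 0)
    (h2 : α * a.2 + β * b.2 + γ * c.2 = 0)
    (hd1 : 0 < det2 b c) (hd2 : 0 < det2 c a)
    (hempty : ∀ w : V, toR (Z + w) ∈ convexHull ℝ ({toR (Z + a), toR (Z + b), toR (Z + c)} : Set (ℝ × ℝ)) →
      w = a ∨ w = b ∨ w = c ∨ w = 0) :
    det2 b c = 1 := by
  by_contra hne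
  have hD2 : 2 ≤ det2 b c := by omega
  obtain ⟨w, hw1, hw2, hw3, hw0, hwb, hwc⟩ := exists_extra b c hD2
  have hzin := zmem Z a b c α β γ hβ hγ hsum h1 h2 hα
  have hbm : toR (Z + b) ∈ convexHull ℝ ({toR (Z + a), toR (Z + b), toR (Z + c)} : Set (ℝ × ℝ)) :=
    subset_convexHull _ _ (by simp)
  have hcm : toR (Z + c) ∈ convexHull ℝ ({toR (Z + a), toR (Z + b), toR (Z + c)} : Set (ℝ × ℝ)) :=
    subset_convexHull _ _ (by simp)
  have hDpos : (0:ℝ) < (det2 b c : ℝ) := by exact_mod_cast hd1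
  set μ : ℝ := (det2 w c : ℝ) / (det2 b c : ℝ) with hμdef
  set ν : ℝ := (det2 b w : ℝ) / (det2 b c : ℝ) with hνdef
  have hμ0 : 0 ≤ μ := div_nonneg (by exact_mod_cast hw1) hDpos.le
  have hν0 : 0 ≤ ν := div_nonneg (by exact_mod_cast hw2) hDpos.le
  have hμν : μ + ν ≤ 1 := by
    rw [hμdef, hνdef, ← add_div, div_le_one hDpos]
    exact_mod_cast hw3
  have key := combo_mem hzin hbm hcm hμ0 hν0 hμν
  have hid1 : ((det2 b c : ℝ)) * w.1 = (det2 w c : ℝ) * b.1 + (det2 b w : ℝ) * c.1 := by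
    exact_mod_cast congrArg (Int.cast : ℤ → ℝ) (show (det2 b c) * w.1 = det2 w c * b.1 + det2 b w * c.1 by simp only [det2]; ring)
  have hid2 : ((det2 b c : ℝ)) * w.2 = (det2 w c : ℝ) * b.2 + (det2 b w : ℝ) * c.2 := by
    exact_mod_cast congrArg (Int.cast : ℤ → ℝ) (show (det2 b c) * w.2 = det2 w c * b.2 + det2 b w * c.2 by simp only [det2]; ring)
  have heq : toR (Z + w) = (1 - μ - ν) • toR Z + μ • toR (Z + b) + ν • toR (Z + c) := by
    rw [Prod.ext_iff]
    constructor
    · simp only [toR, Prod.smul_fst, Prod.fst_add, smul_eq_mul, hμdef, hνdef]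
      push_cast
      field_simp
      linear_combination hid1
    · simp only [toR, Prod.smul_snd, Prod.snd_add, smul_eq_mul, hμdef, hνdef]
      push_cast
      field_simp
      linear_combination hid2
  rw [← heq] at key
  rcases hempty w key with h | h | h | h
  · rw [h] at hw1
    have : det2 a c = -det2 c a := by simp only [det2]; ring
    omega
  · exact hwb h
  · exact hwc h
  · exact hw0 h

lemma exists_nonneg_dot (a b c : V) (h : a + b + c = 0)
    (d1 : det2 b c = 1) (d3 : det2 a b = 1) :
    0 ≤ dot b c ∨ 0 ≤ dot c a ∨ 0 ≤ dot a b := by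
  by_contra hcon
  push_neg at hcon
  obtain ⟨hbc, hca, hab⟩ := hcon
  have ha1 : a.1 = -b.1 - c.1 := by
    have := congrArg Prod.fst h; simp at this; omega
  have ha2 : a.2 = -b.2 - c.2 := by
    have := congrArg Prod.snd h; simp at this; omega
  simp only [det2, dot, nsq, ha1, ha2] at *
  -- t := dot b c ≤ -1, B + t ≥ 1, C + t ≥ 1, t^2 + 1 = B*C
  have hB : (1:ℤ) ≤ b.1^2 + b.2^2 + (b.1*c.1 + b.2*c.2) := by nlinarith [hab]
  have hC : (1:ℤ) ≤ c.1^2 + c.2^2 + (b.1*c.1 + b.2*c.2) := by nlinarith [hca]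
  have hlag : (b.1*c.2 - b.2*c.1)^2 + (b.1*c.1 + b.2*c.2)^2
      = (b.1^2 + b.2^2) * (c.1^2 + c.2^2) := by ring
  have ht : b.1*c.1 + b.2*c.2 ≤ -1 := by omega
  nlinarith [mul_nonneg (by linarith : (0:ℤ) ≤ b.1^2 + b.2^2 + (b.1*c.1+b.2*c.2) - 1)
    (by linarith : (0:ℤ) ≤ c.1^2 + c.2^2 + (b.1*c.1+b.2*c.2) - 1), d1, hlag, ht]

lemma nsq_pos_of_det (b c : V) (h : det2 b c = 1) : 1 ≤ nsq b ∧ 1 ≤ nsq c := by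
  constructor
  · by_contra hb
    push_neg at hb
    have h1 : b.1 = 0 := by simp only [nsq] at hb; nlinarith [sq_nonneg b.1, sq_nonneg b.2]
    have h2 : b.2 = 0 := by simp only [nsq] at hb; nlinarith [sq_nonneg b.1, sq_nonneg b.2]
    simp [det2, h1, h2] at h
  · by_contra hb
    push_neg at hb
    have h1 : c.1 = 0 := by simp only [nsq] at hb; nlinarith [sq_nonneg c.1, sq_nonneg c.2]
    have h2 : c.2 = 0 := by simp only [nsq] at hb; nlinarith [sq_nonneg c.1, sq_nonneg c.2]
    simp [det2, h1, h2] at h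

lemma irred_of_parents (f g e : V) (hfg : IsParents f g e) : Irred e := by
  obtain ⟨he, hdet, -⟩ := hfg
  have h1 : e.1 = f.1 + g.1 := by rw [he]; simp
  have h2 : e.2 = f.2 + g.2 := by rw [he]; simp
  have hdvd : (Int.gcd e.1 e.2 : ℤ) ∣ 1 := by
    have d1 : (Int.gcd e.1 e.2 : ℤ) ∣ e.1 := Int.gcd_dvd_left _ _
    have d2 : (Int.gcd e.1 e.2 : ℤ) ∣ e.2 := Int.gcd_dvd_right _ _
    have : (Int.gcd e.1 e.2 : ℤ) ∣ f.1 * e.2 - f.2 * e.1 := by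
      exact dvd_sub (Dvd.dvd.mul_left d2 _) (Dvd.dvd.mul_left d1 _)
    have heq : f.1 * e.2 - f.2 * e.1 = 1 := by
      rw [h1, h2]; simp only [det2] at hdet; linear_combination hdet
    rwa [heq] at this
  have := Int.eq_one_of_dvd_one (by positivity) hdvd
  exact_mod_cast this

lemma nsq_big (f g e : V) (hfg : IsParents f g e) : 1 < nsq e := by
  obtain ⟨he, hdet, hdot⟩ := hfg
  obtain ⟨hf, hg⟩ := nsq_pos_of_det f g hdet
  have h1 : e.1 = f.1 + g.1 := by rw [he]; simp
  have h2 : e.2 = f.2 + g.2 := by rw [he]; simp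
  simp only [nsq, dot, h1, h2] at *
  nlinarith [hf, hg, hdot]

lemma key (Z a b c : V) (α β γ : ℝ) (hα : 0 < α) (hβ : 0 < β) (hγ : 0 < γ)
    (hsum : α + β + γ = 1)
    (h1 : α * a.1 + β * b.1 + γ * c.1 = 0)
    (h2 : α * a.2 + β * b.2 + γ * c.2 = 0)
    (hd : 0 < det2 b c)
    (hempty : ∀ w : V, toR (Z + w) ∈ convexHull ℝ ({toR (Z + a), toR (Z + b), toR (Z + c)} : Set (ℝ × ℝ)) →
      w = a ∨ w = b ∨ w = c ∨ w = 0) :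
    α = 1 / 3 ∧ β = 1 / 3 ∧ γ = 1 / 3 ∧
      ∃ p' q' r' : ℝ × ℝ, [p', q', r'].Perm [toR (Z + a), toR (Z + b), toR (Z + c)] ∧
        ∃ e f g : V, Irred e ∧ 1 < nsq e ∧ IsParents f g e ∧
          p' = toR Z + toR e ∧ q' = toR Z - toR f ∧ r' = toR Z - toR g := by
  -- proportionality relations
  have e1 : α * (det2 c a : ℝ) = β * (det2 b c : ℝ) := by
    simp only [det2]; push_cast
    linear_combination (c.1:ℝ) * h2 - (c.2:ℝ) * h1
  have e2 : α * (det2 a b : ℝ) = γ * (det2 b c : ℝ) := by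
    simp only [det2]; push_cast
    linear_combination (b.2:ℝ) * h1 - (b.1:ℝ) * h2
  have hdR : (0:ℝ) < (det2 b c : ℝ) := by exact_mod_cast hd
  have hd2 : 0 < det2 c a := by
    have : (0:ℝ) < (det2 c a : ℝ) := by nlinarith
    exact_mod_cast this
  have hd3 : 0 < det2 a b := by
    have : (0:ℝ) < (det2 a b : ℝ) := by nlinarith
    exact_mod_cast this
  -- permuted hypotheses
  have hset1 : ({toR (Z + b), toR (Z + c), toR (Z + a)} : Set (ℝ × ℝ))
      = {toR (Z + a), toR (Z + b), toR (Z + c)} := by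
    ext x; simp only [Set.mem_insert_iff, Set.mem_singleton_iff]; tauto
  have hset2 : ({toR (Z + c), toR (Z + a), toR (Z + b)} : Set (ℝ × ℝ))
      = {toR (Z + a), toR (Z + b), toR (Z + c)} := by
    ext x; simp only [Set.mem_insert_iff, Set.mem_singleton_iff]; tauto
  have hempty1 : ∀ w : V, toR (Z + w) ∈ convexHull ℝ ({toR (Z + b), toR (Z + c), toR (Z + a)} : Set (ℝ × ℝ)) →
      w = b ∨ w = c ∨ w = a ∨ w = 0 := by
    intro w hw; rw [hset1] at hw; rcases hempty w hw with h | h | h | h <;> tauto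
  have hempty2 : ∀ w : V, toR (Z + w) ∈ convexHull ℝ ({toR (Z + c), toR (Z + a), toR (Z + b)} : Set (ℝ × ℝ)) →
      w = c ∨ w = a ∨ w = b ∨ w = 0 := by
    intro w hw; rw [hset2] at hw; rcases hempty w hw with h | h | h | h <;> tauto
  -- unimodularity of the three subtriangles
  have hu1 : det2 b c = 1 := subtri Z a b c α β γ hα hβ hγ hsum h1 h2 hd hd2 hempty
  have hu2 : det2 c a = 1 := subtri Z b c a β γ α hβ hγ hα (by linarith)
    (by linear_combination h1) (by linear_combination h2) hd2 hd3 hempty1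
  have hu3 : det2 a b = 1 := subtri Z c a b γ α β hγ hα hβ (by linarith)
    (by linear_combination h1) (by linear_combination h2) hd3 hd hempty2
  -- equal weights
  rw [hu1] at e1 e2
  rw [hu2] at e1
  rw [hu3] at e2
  push_cast at e1 e2
  have hαv : α = 1/3 := by linarith
  have hβv : β = 1/3 := by linarith
  have hγv : γ = 1/3 := by linarith
  refine ⟨hαv, hβv, hγv, ?_⟩
  -- a + b + c = 0
  have habc : a + b + c = 0 := by
    rw [hαv, hβv, hγv] at h1 h2
    have k1 : a.1 + b.1 + c.1 = 0 := by exact_mod_cast (by push_cast; linarith : ((a.1 + b.1 + c.1 : ℤ) : ℝ) = 0)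
    have k2 : a.2 + b.2 + c.2 = 0 := by exact_mod_cast (by push_cast; linarith : ((a.2 + b.2 + c.2 : ℤ) : ℝ) = 0)
    rw [Prod.ext_iff]
    constructor <;> simp <;> omega
  have htoR : ∀ x y : V, toR (x + y) = toR x + toR y := by
    intro x y; rw [Prod.ext_iff]; simp [toR]
  have htoRneg : ∀ x : V, toR (-x) = -toR x := by
    intro x; rw [Prod.ext_iff]; simp [toR]
  rcases exists_nonneg_dot a b c habc hu1 hu3 with hdot | hdot | hdot
  · -- e = a, f = -b, g = -c
    have hpar : IsParents (-b) (-c) a := by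
      refine ⟨?_, ?_, ?_⟩
      · rw [Prod.ext_iff] at habc ⊢; simp at habc ⊢; omega
      · rw [show det2 (-b) (-c) = det2 b c by simp only [det2, Prod.fst_neg, Prod.snd_neg]; ring, hu1]
      · rw [show dot (-b) (-c) = dot b c by simp only [dot, Prod.fst_neg, Prod.snd_neg]; ring]; exact hdot
    refine ⟨toR (Z + a), toR (Z + b), toR (Z + c), List.Perm.refl _,
      a, -b, -c, irred_of_parents _ _ _ hpar, nsq_big _ _ _ hpar, hpar, ?_, ?_, ?_⟩
    · rw [htoR]
    · rw [htoRneg, sub_neg_eq_add, htoR]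
    · rw [htoRneg, sub_neg_eq_add, htoR]
  · -- e = b, f = -c, g = -a ; perm [q, r, p]
    have habc' : b + c + a = 0 := by rw [Prod.ext_iff] at habc ⊢; simp at habc ⊢; omega
    have hpar : IsParents (-c) (-a) b := by
      refine ⟨?_, ?_, ?_⟩
      · rw [Prod.ext_iff] at habc ⊢; simp at habc ⊢; omega
      · rw [show det2 (-c) (-a) = det2 c a by simp only [det2, Prod.fst_neg, Prod.snd_neg]; ring, hu2]
      · rw [show dot (-c) (-a) = dot c a by simp only [dot, Prod.fst_neg, Prod.snd_neg]; ring]; exact hdot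
    refine ⟨toR (Z + b), toR (Z + c), toR (Z + a),
      List.perm_append_comm (l₁ := [toR (Z + b), toR (Z + c)]) (l₂ := [toR (Z + a)]),
      b, -c, -a, irred_of_parents _ _ _ hpar, nsq_big _ _ _ hpar, hpar, ?_, ?_, ?_⟩
    · rw [htoR]
    · rw [htoRneg, sub_neg_eq_add, htoR]
    · rw [htoRneg, sub_neg_eq_add, htoR]
  · -- e = c, f = -a, g = -b ; perm [r, p, q]
    have hpar : IsParents (-a) (-b) c := by
      refine ⟨?_, ?_, ?_⟩
      · rw [Prod.ext_iff] at habc ⊢; simp at habc ⊢; omega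
      · rw [show det2 (-a) (-b) = det2 a b by simp only [det2, Prod.fst_neg, Prod.snd_neg]; ring, hu3]
      · rw [show dot (-a) (-b) = dot a b by simp only [dot, Prod.fst_neg, Prod.snd_neg]; ring]; exact hdot
    refine ⟨toR (Z + c), toR (Z + a), toR (Z + b),
      List.perm_append_comm (l₁ := [toR (Z + c)]) (l₂ := [toR (Z + a), toR (Z + b)]),
      c, -a, -b, irred_of_parents _ _ _ hpar, nsq_big _ _ _ hpar, hpar, ?_, ?_, ?_⟩
    · rw [htoR]
    · rw [htoRneg, sub_neg_eq_add, htoR]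
    · rw [htoRneg, sub_neg_eq_add, htoR]

/-- Minimal triangle constraints on a grid `X = Ω ∩ ℤ²` have the form
`z + e`, `z - f`, `z - g` with `f, g` the parents of `e`, and weights `1/3`. -/
theorem triangle_constraint (Ω : Set (ℝ × ℝ)) (hΩ : Convex ℝ Ω)
    (X : Set (ℝ × ℝ)) (hX : X = Ω ∩ {p | ∃ v : V, p = toR v})
    (p q r z : ℝ × ℝ) (hp : p ∈ X) (hq : q ∈ X) (hr : r ∈ X) (hz : z ∈ X)
    (α β γ : ℝ) (hα : 0 < α) (hβ : 0 < β) (hγ : 0 < γ) (hsum : α + β + γ = 1)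
    (hzd : z = α • p + β • q + γ • r)
    (hcol : ¬ Collinear ℝ ({p, q, r} : Set (ℝ × ℝ)))
    (hint : convexHull ℝ ({p, q, r} : Set (ℝ × ℝ)) ∩ X = {p, q, r, z}) :
    α = 1 / 3 ∧ β = 1 / 3 ∧ γ = 1 / 3 ∧
      ∃ p' q' r' : ℝ × ℝ, [p', q', r'].Perm [p, q, r] ∧
        ∃ e f g : V, Irred e ∧ 1 < nsq e ∧ IsParents f g e ∧
          p' = z + toR e ∧ q' = z - toR f ∧ r' = z - toR g := by
  rw [hX] at hp hq hr hz
  obtain ⟨hpΩ, P, hP⟩ := hp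
  obtain ⟨hqΩ, Q, hQ⟩ := hq
  obtain ⟨hrΩ, R, hR⟩ := hr
  obtain ⟨hzΩ, Z, hZ⟩ := hz
  subst hP hQ hR hZ
  set a : V := P - Z with ha
  set b : V := Q - Z with hb
  set c : V := R - Z with hc
  have hZa : Z + a = P := by rw [ha]; abel
  have hZb : Z + b = Q := by rw [hb]; abel
  have hZc : Z + c = R := by rw [hc]; abel
  -- componentwise barycentric relations
  have comp1 : (Z.1 : ℝ) = α * P.1 + β * Q.1 + γ * R.1 := by
    have := congrArg Prod.fst hzd
    simpa [toR, Prod.smul_fst, smul_eq_mul] using this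
  have comp2 : (Z.2 : ℝ) = α * P.2 + β * Q.2 + γ * R.2 := by
    have := congrArg Prod.snd hzd
    simpa [toR, Prod.smul_snd, smul_eq_mul] using this
  have h1 : α * (a.1 : ℝ) + β * (b.1 : ℝ) + γ * (c.1 : ℝ) = 0 := by
    rw [ha, hb, hc]
    push_cast [Prod.fst_sub]
    linear_combination -comp1 - (Z.1 : ℝ) * hsum
  have h2 : α * (a.2 : ℝ) + β * (b.2 : ℝ) + γ * (c.2 : ℝ) = 0 := by
    rw [ha, hb, hc]
    push_cast [Prod.snd_sub]
    linear_combination -comp2 - (Z.2 : ℝ) * hsum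
  -- emptiness hypothesis
  have hsetPQR : ({toR (Z + a), toR (Z + b), toR (Z + c)} : Set (ℝ × ℝ))
      = {toR P, toR Q, toR R} := by rw [hZa, hZb, hZc]
  have hhullΩ : convexHull ℝ ({toR P, toR Q, toR R} : Set (ℝ × ℝ)) ⊆ Ω := by
    apply convexHull_min _ hΩ
    intro x hx
    rcases hx with hx | hx | hx <;> subst hx <;> assumption
  have hempty : ∀ w : V, toR (Z + w) ∈ convexHull ℝ
      ({toR (Z + a), toR (Z + b), toR (Z + c)} : Set (ℝ × ℝ)) →
      w = a ∨ w = b ∨ w = c ∨ w = 0 := by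
    intro w hw
    rw [hsetPQR] at hw
    have hmemX : toR (Z + w) ∈ X := by
      rw [hX]; exact ⟨hhullΩ hw, ⟨Z + w, rfl⟩⟩
    have : toR (Z + w) ∈ ({toR P, toR Q, toR R, toR Z} : Set (ℝ × ℝ)) := by
      rw [← hint]; exact ⟨hw, hmemX⟩
    rcases this with h | h | h | h
    · left
      have := toR_inj h
      rw [Prod.ext_iff] at this ⊢; simp only [ha, Prod.fst_add, Prod.snd_add, Prod.fst_sub, Prod.snd_sub] at this ⊢; omega
    · right; left
      have := toR_inj h
      rw [Prod.ext_iff] at this ⊢; simp only [hb, Prod.fst_add, Prod.snd_add, Prod.fst_sub, Prod.snd_sub] at this ⊢; omega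
    · right; right; left
      have := toR_inj h
      rw [Prod.ext_iff] at this ⊢; simp only [hc, Prod.fst_add, Prod.snd_add, Prod.fst_sub, Prod.snd_sub] at this ⊢; omega
    · right; right; right
      have := toR_inj h
      rw [Prod.ext_iff] at this ⊢; simp only [Prod.fst_add, Prod.snd_add, Prod.fst_zero, Prod.snd_zero] at this ⊢; omega
  -- noncollinearity gives nonzero total determinant
  have hDtot : det2 b c + det2 c a + det2 a b ≠ 0 := by
    intro h0
    apply hcol
    apply collinear_of_det
    have hint' : ((Q.1 - P.1) * (R.2 - P.2) - (Q.2 - P.2) * (R.1 - P.1) : ℤ) = 0 := by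
      simp only [det2, ha, hb, hc, Prod.fst_sub, Prod.snd_sub] at h0
      linear_combination h0
    have hcast : (((Q.1 - P.1) * (R.2 - P.2) - (Q.2 - P.2) * (R.1 - P.1) : ℤ) : ℝ) = 0 := by
      exact_mod_cast congrArg (Int.cast : ℤ → ℝ) hint'
    simp only [toR]
    push_cast at hcast ⊢
    linarith [hcast]
  -- sign analysis
  have e1 : α * (det2 c a : ℝ) = β * (det2 b c : ℝ) := by
    simp only [det2]; push_cast
    linear_combination (c.1 : ℝ) * h2 - (c.2 : ℝ) * h1
  have e2 : α * (det2 a b : ℝ) = γ * (det2 b c : ℝ) := by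
    simp only [det2]; push_cast
    linear_combination (b.2 : ℝ) * h1 - (b.1 : ℝ) * h2
  have hbc : det2 b c ≠ 0 := by
    intro h0
    have hz1 : (det2 c a : ℝ) = 0 := by
      rcases mul_eq_zero.1 (show α * (det2 c a : ℝ) = 0 by rw [e1, h0]; simp) with h | h
      · linarith
      · exact h
    have hz2 : (det2 a b : ℝ) = 0 := by
      rcases mul_eq_zero.1 (show α * (det2 a b : ℝ) = 0 by rw [e2, h0]; simp) with h | h
      · linarith
      · exact h
    have hz1' : det2 c a = 0 := by exact_mod_cast hz1
    have hz2' : det2 a b = 0 := by exact_mod_cast hz2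
    omega
  rcases lt_trichotomy (det2 b c) 0 with hlt | heq0 | hgt
  · -- negative orientation: swap b and c
    have hcb : 0 < det2 c b := by
      have : det2 c b = -det2 b c := by simp only [det2]; ring
      omega
    have hset2 : ({toR (Z + a), toR (Z + c), toR (Z + b)} : Set (ℝ × ℝ))
        = {toR (Z + a), toR (Z + b), toR (Z + c)} := by
      ext x; simp only [Set.mem_insert_iff, Set.mem_singleton_iff]; tauto
    have hempty2 : ∀ w : V, toR (Z + w) ∈ convexHull ℝ
        ({toR (Z + a), toR (Z + c), toR (Z + b)} : Set (ℝ × ℝ)) →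
        w = a ∨ w = c ∨ w = b ∨ w = 0 := by
      intro w hw; rw [hset2] at hw
      rcases hempty w hw with h | h | h | h <;> tauto
    obtain ⟨hA, hC, hB, p', q', r', hperm, rest⟩ :=
      key Z a c b α γ β hα hγ hβ (by linarith)
        (by linear_combination h1) (by linear_combination h2) hcb hempty2
    refine ⟨hA, hB, hC, p', q', r', ?_, rest⟩
    rw [hZa, hZb, hZc] at hperm
    exact hperm.trans (List.Perm.cons _ (List.Perm.swap _ _ _))
  · exact absurd heq0 hbc
  · obtain ⟨hA, hB, hC, p', q', r', hperm, rest⟩ :=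
      key Z a b c α β γ hα hβ hγ hsum h1 h2 hgt hempty
    rw [hZa, hZb, hZc] at hperm
    exact ⟨hA, hB, hC, p', q', r', hperm, rest⟩
end

section
/- Let e ∈ ℤ² be irreducible with ‖e‖ > 1, and let (f,g) be a direct acute basis of ℤ² with e in the interior of the cone generated by f and g (i.e. e = αf + βg with α, β positive integers). Then both parents of e lie in the triangle with vertices e, f, g. -/
lemma one_le_sq_add_sq (x y A B : ℤ) (h : x * A + y * B = 1) : 1 ≤ x ^ 2 + y ^ 2 := by
  rcases eq_or_ne x 0 with hx | hx
  · rcases eq_or_ne y 0 with hy | hy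
    · subst hx; subst hy; simp at h
    · have := Int.one_le_abs hy
      nlinarith [sq_nonneg x, sq_abs y, abs_nonneg y]
  · have := Int.one_le_abs hx
    nlinarith [sq_nonneg y, sq_abs x, abs_nonneg x]


lemma nonneg_of_mul (b x : ℤ) (hb : 1 ≤ b) (h : 1 ≤ b * x) : 0 ≤ x := by
  by_contra hx
  push_neg at hx
  have h1 : 0 ≤ b * (-x) := mul_nonneg (by linarith) (by linarith)
  nlinarith

lemma core (a b p q r s Nf Ng M : ℤ) (ha : 1 ≤ a) (hb : 1 ≤ b)
    (hNf : 1 ≤ Nf) (hNg : 1 ≤ Ng) (hM : 0 ≤ M)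
    (h1 : p + r = a) (h2 : q + s = b) (h3 : b*p - a*q = 1) (h3' : a*s - b*r = 1)
    (h4 : 0 ≤ p*r*Nf + q*s*Ng + (p*s + q*r)*M) :
    1 ≤ p ∧ 0 ≤ q ∧ 0 ≤ r ∧ 1 ≤ s := by
  have hq : 0 ≤ q := by
    by_contra hq
    push_neg at hq
    have hq' : q ≤ -1 := by omega
    have haq : a * q ≤ a * (-1) := mul_le_mul_of_nonneg_left hq' (by linarith)
    have hbp : b * p ≤ 0 := by linarith
    have hp : p ≤ 0 := by
      by_contra hp
      push_neg at hp
      nlinarith [mul_pos (show (0:ℤ) < b by omega) hp]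
    have hr : 1 ≤ r := by omega
    have hs : 2 ≤ s := by omega
    have t1 : p*r*Nf ≤ 0 := by
      nlinarith [mul_nonneg (mul_nonneg (show (0:ℤ) ≤ -p by linarith) (show (0:ℤ) ≤ r by linarith)) (show (0:ℤ) ≤ Nf by linarith)]
    have hqs : q*s ≤ -2 := by
      have := mul_le_mul_of_nonneg_right hq' (show (0:ℤ) ≤ s by linarith)
      nlinarith
    have t2 : q*s*Ng ≤ -2 := by
      have := mul_le_mul_of_nonpos_left hNg (show q*s ≤ 0 by linarith)
      nlinarith
    have t3 : (p*s+q*r)*M ≤ 0 := by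
      have hps : p*s ≤ 0 := mul_nonpos_iff.2 (Or.inr ⟨by linarith, by linarith⟩)
      have hqr : q*r ≤ 0 := mul_nonpos_iff.2 (Or.inr ⟨by linarith, by linarith⟩)
      nlinarith [mul_nonneg hM (show (0:ℤ) ≤ -(p*s+q*r) by linarith)]
    linarith
  have hr : 0 ≤ r := by
    by_contra hr
    push_neg at hr
    have hr' : r ≤ -1 := by omega
    have hp : 2 ≤ p := by omega
    have hbr : b * r ≤ b * (-1) := mul_le_mul_of_nonneg_left hr' (by linarith)
    have has : a * s ≤ 0 := by linarith
    have hs : s ≤ 0 := by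
      by_contra hs
      push_neg at hs
      nlinarith [mul_pos (show (0:ℤ) < a by omega) hs]
    have hq1 : 1 ≤ q := by
      have hbp : 2 ≤ b * p := by nlinarith [mul_le_mul_of_nonneg_left hp (show (0:ℤ) ≤ b by linarith)]
      have haq : 1 ≤ a * q := by linarith
      have h0 := nonneg_of_mul a q ha haq
      by_contra hqc
      push_neg at hqc
      have hq0 : q = 0 := by omega
      rw [hq0, mul_zero] at haq
      omega
    have hpr : p*r ≤ -2 := by
      have := mul_le_mul_of_nonneg_left hr' (show (0:ℤ) ≤ p by linarith)
      nlinarith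
    have t1 : p*r*Nf ≤ -2 := by
      have := mul_le_mul_of_nonpos_left hNf (show p*r ≤ 0 by linarith)
      nlinarith
    have t2 : q*s*Ng ≤ 0 := by
      nlinarith [mul_nonneg (mul_nonneg (show (0:ℤ) ≤ q by linarith) (show (0:ℤ) ≤ -s by linarith)) (show (0:ℤ) ≤ Ng by linarith)]
    have t3 : (p*s+q*r)*M ≤ 0 := by
      have hps : p*s ≤ 0 := mul_nonpos_iff.2 (Or.inl ⟨by linarith, by linarith⟩)
      have hqr : q*r ≤ 0 := mul_nonpos_iff.2 (Or.inl ⟨by linarith, by linarith⟩)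
      nlinarith [mul_nonneg hM (show (0:ℤ) ≤ -(p*s+q*r) by linarith)]
    linarith
  have hp : 1 ≤ p := by
    have haq : 0 ≤ a * q := mul_nonneg (by linarith) hq
    have hbp : 1 ≤ b * p := by linarith
    have h0 := nonneg_of_mul b p hb hbp
    by_contra hp
    push_neg at hp
    have hp0 : p = 0 := by omega
    rw [hp0, mul_zero] at hbp
    omega
  have hs : 1 ≤ s := by
    have hbr : 0 ≤ b * r := mul_nonneg (by linarith) hr
    have has : 1 ≤ a * s := by linarith
    have h0 := nonneg_of_mul a s ha has
    by_contra hs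
    push_neg at hs
    have hs0 : s = 0 := by omega
    rw [hs0, mul_zero] at has
    omega
  exact ⟨hp, hq, hr, hs⟩



lemma hull_aux (x y z v : ℤ × ℤ) (D n1 n2 n3 : ℤ)
    (hD : 1 ≤ D) (h1 : 0 ≤ n1) (h2 : 0 ≤ n2) (h3 : 0 ≤ n3)
    (hs : n1 + n2 + n3 = D)
    (e1 : D * v.1 = n1 * x.1 + n2 * y.1 + n3 * z.1)
    (e2 : D * v.2 = n1 * x.2 + n2 * y.2 + n3 * z.2) :
    toR v ∈ convexHull ℝ ({toR x, toR y, toR z} : Set (ℝ × ℝ)) := by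
  have hD0 : (0:ℝ) < (D : ℝ) := by exact_mod_cast (show (0:ℤ) < D by omega)
  have hc : Convex ℝ (convexHull ℝ ({toR x, toR y, toR z} : Set (ℝ × ℝ))) :=
    convex_convexHull ℝ _
  have hmem := hc.sum_mem (t := (Finset.univ : Finset (Fin 3)))
      (w := ![(n1:ℝ)/D, (n2:ℝ)/D, (n3:ℝ)/D]) (z := ![toR x, toR y, toR z])
      (by
        intro i _
        fin_cases i <;> simp <;> positivity)
      (by
        simp [Fin.sum_univ_three]
        field_simp
        push_cast [← hs]
        ring)
      (by
        intro i _
        fin_cases i <;>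
          exact subset_convexHull ℝ _ (by simp))
  convert hmem using 1
  simp only [Fin.sum_univ_three, Matrix.cons_val_zero, Matrix.cons_val_one, Matrix.head_cons,
    Matrix.cons_val_two, Matrix.tail_cons]
  have E1 : (D:ℝ) * (v.1:ℝ) = (n1:ℝ) * x.1 + (n2:ℝ) * y.1 + (n3:ℝ) * z.1 := by exact_mod_cast e1
  have E2 : (D:ℝ) * (v.2:ℝ) = (n1:ℝ) * x.2 + (n2:ℝ) * y.2 + (n3:ℝ) * z.2 := by exact_mod_cast e2
  simp only [toR, Prod.ext_iff, Prod.smul_fst, Prod.smul_snd, Prod.fst_add, Prod.snd_add,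
    smul_eq_mul]
  constructor
  · field_simp
    linear_combination E1
  · field_simp
    linear_combination E2

set_option maxHeartbeats 1000000 in
/-- If an irreducible `e` with `‖e‖ > 1` lies in the interior of the cone generated by
a direct acute basis `(f,g)`, then both parents of `e` lie in the triangle `[e, f, g]`. -/
theorem parents_in_triangle (e f g : V) (he : Irred e) (hn : 1 < nsq e)
    (hd : det2 f g = 1) (hac : 0 ≤ dot f g)
    (a b : ℤ) (ha : 1 ≤ a) (hb : 1 ≤ b) (hcone : e = a • f + b • g)
    (f' g' : V) (hp : IsParents f' g' e) :
    toR f' ∈ convexHull ℝ ({toR e, toR f, toR g} : Set (ℝ × ℝ)) ∧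
      toR g' ∈ convexHull ℝ ({toR e, toR f, toR g} : Set (ℝ × ℝ)) := by
  obtain ⟨hsum, hdet', hdot'⟩ := hp
  simp only [det2] at hd hdet'
  simp only [dot] at hac hdot'
  -- coordinates of e in the basis and as sum of parents
  have he1 : e.1 = a * f.1 + b * g.1 := by
    rw [hcone]; simp [smul_eq_mul]
  have he2 : e.2 = a * f.2 + b * g.2 := by
    rw [hcone]; simp [smul_eq_mul]
  have hs1 : f'.1 + g'.1 = a * f.1 + b * g.1 := by rw [← he1, hsum]; rfl
  have hs2 : f'.2 + g'.2 = a * f.2 + b * g.2 := by rw [← he2, hsum]; rfl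
  -- coordinates of the parents in the basis (f, g)
  set p : ℤ := f'.1 * g.2 - f'.2 * g.1 with hpdef
  set q : ℤ := f.1 * f'.2 - f.2 * f'.1 with hqdef
  set r : ℤ := g'.1 * g.2 - g'.2 * g.1 with hrdef
  set s : ℤ := f.1 * g'.2 - f.2 * g'.1 with hsdef
  have hf'1 : f'.1 = p * f.1 + q * g.1 := by rw [hpdef, hqdef]; linear_combination (-f'.1) * hd
  have hf'2 : f'.2 = p * f.2 + q * g.2 := by rw [hpdef, hqdef]; linear_combination (-f'.2) * hd
  have hg'1 : g'.1 = r * f.1 + s * g.1 := by rw [hrdef, hsdef]; linear_combination (-g'.1) * hd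
  have hg'2 : g'.2 = r * f.2 + s * g.2 := by rw [hrdef, hsdef]; linear_combination (-g'.2) * hd
  have hpr : p + r = a := by
    rw [hpdef, hrdef]; linear_combination g.2 * hs1 - g.1 * hs2 + a * hd
  have hqs : q + s = b := by
    rw [hqdef, hsdef]; linear_combination f.1 * hs2 - f.2 * hs1 + b * hd
  have hps : p * s - q * r = 1 := by
    rw [hpdef, hqdef, hrdef, hsdef]
    linear_combination (f'.1 * g'.2 - f'.2 * g'.1) * hd + hdet'
  have h3 : b * p - a * q = 1 := by linear_combination hps - p * hqs + q * hpr
  have h3' : a * s - b * r = 1 := by linear_combination a * hqs - b * hpr + h3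
  -- norms and dot products
  have hNf : 1 ≤ f.1 ^ 2 + f.2 ^ 2 :=
    one_le_sq_add_sq f.1 f.2 g.2 (-g.1) (by linarith)
  have hNg : 1 ≤ g.1 ^ 2 + g.2 ^ 2 :=
    one_le_sq_add_sq g.1 g.2 (-f.2) f.1 (by linarith)
  have hdd : f'.1 * g'.1 + f'.2 * g'.2 =
      p * r * (f.1 ^ 2 + f.2 ^ 2) + q * s * (g.1 ^ 2 + g.2 ^ 2)
        + (p * s + q * r) * (f.1 * g.1 + f.2 * g.2) := by
    linear_combination g'.1 * hf'1 + g'.2 * hf'2 + (p * f.1 + q * g.1) * hg'1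
      + (p * f.2 + q * g.2) * hg'2
  rw [hdd] at hdot'
  obtain ⟨hp1, hq0, hr0, hs1'⟩ :=
    core a b p q r s _ _ _ ha hb hNf hNg hac hpr hqs h3 h3' hdot'
  -- barycentric coordinates
  have hD : 1 ≤ a + b - 1 := by omega
  constructor
  · -- f'
    refine hull_aux e f g f' (a + b - 1) (p + q - 1) (a - a * q + (b - 1) * p) (b - 1 - q)
      hD (by omega) ?_ (by omega) (by linear_combination h3) ?_ ?_
    · -- 0 ≤ a - a*q + (b-1)*p
      have hqb : q ≤ b - 1 := by omega
      have key : b * (a - a * q + (b - 1) * p) = a * b + b - 1 - a * q := by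
        linear_combination (b - 1) * h3
      have haq : a * q ≤ a * (b - 1) := mul_le_mul_of_nonneg_left hqb (by linarith)
      refine nonneg_of_mul b _ hb ?_
      nlinarith
    · linear_combination (a + b - 1) * hf'1 - (p + q - 1) * he1 - g.1 * h3
    · linear_combination (a + b - 1) * hf'2 - (p + q - 1) * he2 - g.2 * h3
  · -- g'
    refine hull_aux e f g g' (a + b - 1) (r + s - 1) (a - 1 - r) (b - b * r + (a - 1) * s)
      hD (by omega) (by omega) ?_ (by linear_combination h3') ?_ ?_
    · have hra : r ≤ a - 1 := by omega
      have key : a * (b - b * r + (a - 1) * s) = a * b + a - 1 - b * r := by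
        linear_combination (a - 1) * h3'
      have hbr : b * r ≤ b * (a - 1) := mul_le_mul_of_nonneg_left hra (by linarith)
      refine nonneg_of_mul a _ ha ?_
      nlinarith
    · linear_combination (a + b - 1) * hg'1 - (r + s - 1) * he1 - f.1 * h3'
    · linear_combination (a + b - 1) * hg'2 - (r + s - 1) * he2 - f.2 * h3'
end

section
/- Let e ∈ ℤ² \ {0}, and let (f,g) be a direct acute basis of ℤ² such that e = αf + βg with α, β positive integers. Then any child e' of e (i.e. a vector having e as a parent) also satisfies e' = α'f + β'g with α', β' positive integers (i.e. e' lies in the open cone generated by f and g). -/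
lemma key_cone (Nf Ng D a b α β ε : ℤ) (hNf : 1 ≤ Nf) (hNg : 1 ≤ Ng) (hD : 0 ≤ D)
    (ha : 1 ≤ a) (hb : 1 ≤ b) (hε : ε = 1 ∨ ε = -1) (hE : a * β - b * α = ε)
    (hH : a * a * Nf + b * b * Ng + 2 * a * b * D ≤
      a * α * Nf + b * β * Ng + (a * β + b * α) * D) :
    1 ≤ α ∧ 1 ≤ β := by
  rcases le_or_gt 1 α with hα | hα
  · rcases le_or_gt 1 β with hβ | hβ
    · exact ⟨hα, hβ⟩
    · exfalso
      have hβ0 : β ≤ 0 := by omega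
      rcases hε with h1 | h1
      · -- a*β - b*α = 1 impossible: a*β ≤ 0, b*α ≥ 1
        nlinarith [mul_nonneg (by omega : (0:ℤ) ≤ a) (by omega : (0:ℤ) ≤ -β),
          mul_nonneg (by omega : (0:ℤ) ≤ b - 1) (by omega : (0:ℤ) ≤ α - 1)]
      · -- a*β - b*α = -1 ⇒ a*β = 0, b*α = 1
        have h2 : a * β = 0 := by
          nlinarith [mul_nonneg (by omega : (0:ℤ) ≤ a) (by omega : (0:ℤ) ≤ -β),
            mul_nonneg (by omega : (0:ℤ) ≤ b - 1) (by omega : (0:ℤ) ≤ α),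
            mul_nonneg (by omega : (0:ℤ) ≤ b) (by omega : (0:ℤ) ≤ α - 1)]
        have h3 : b * α = 1 := by omega
        have hβz : β = 0 := by
          rcases mul_eq_zero.mp h2 with h | h <;> omega
        have hlin : b + α ≤ 2 := by
          nlinarith [mul_nonneg (by omega : (0:ℤ) ≤ b - 1) (by omega : (0:ℤ) ≤ α - 1)]
        have hb1 : b = 1 := by omega
        have hα1 : α = 1 := by omega
        subst hβz hb1 hα1
        nlinarith [mul_nonneg (by nlinarith : (0:ℤ) ≤ a * a - a) (by omega : (0:ℤ) ≤ Nf),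
          mul_nonneg (by omega : (0:ℤ) ≤ 2 * a - 1) hD]
  · exfalso
    have hα0 : α ≤ 0 := by omega
    rcases le_or_gt 1 β with hβ | hβ
    · rcases hε with h1 | h1
      · -- a*β - b*α = 1 ⇒ a*β = 1, b*α = 0
        have h2 : b * α = 0 := by
          nlinarith [mul_nonneg (by omega : (0:ℤ) ≤ b) (by omega : (0:ℤ) ≤ -α),
            mul_nonneg (by omega : (0:ℤ) ≤ a - 1) (by omega : (0:ℤ) ≤ β),
            mul_nonneg (by omega : (0:ℤ) ≤ a) (by omega : (0:ℤ) ≤ β - 1)]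
        have h3 : a * β = 1 := by omega
        have hαz : α = 0 := by
          rcases mul_eq_zero.mp h2 with h | h <;> omega
        have hlin : a + β ≤ 2 := by
          nlinarith [mul_nonneg (by omega : (0:ℤ) ≤ a - 1) (by omega : (0:ℤ) ≤ β - 1)]
        have ha1 : a = 1 := by omega
        have hβ1 : β = 1 := by omega
        subst hαz ha1 hβ1
        nlinarith [mul_nonneg (by nlinarith : (0:ℤ) ≤ b * b - b) (by omega : (0:ℤ) ≤ Ng),
          mul_nonneg (by omega : (0:ℤ) ≤ 2 * b - 1) hD]
      · -- a*β - b*α = -1 impossible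
        nlinarith [mul_nonneg (by omega : (0:ℤ) ≤ b) (by omega : (0:ℤ) ≤ -α),
          mul_nonneg (by omega : (0:ℤ) ≤ a - 1) (by omega : (0:ℤ) ≤ β),
          mul_nonneg (by omega : (0:ℤ) ≤ a) (by omega : (0:ℤ) ≤ β - 1)]
    · -- both α, β ≤ 0 : dot e e' ≤ 0 < nsq e
      have hβ0 : β ≤ 0 := by omega
      nlinarith [mul_nonneg (by omega : (0:ℤ) ≤ a) (by omega : (0:ℤ) ≤ -α),
        mul_nonneg (by omega : (0:ℤ) ≤ b) (by omega : (0:ℤ) ≤ -β),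
        mul_nonneg (mul_nonneg (by omega : (0:ℤ) ≤ a) (by omega : (0:ℤ) ≤ -β)) hD,
        mul_nonneg (mul_nonneg (by omega : (0:ℤ) ≤ b) (by omega : (0:ℤ) ≤ -α)) hD,
        mul_nonneg (mul_nonneg (by omega : (0:ℤ) ≤ a) (by omega : (0:ℤ) ≤ b)) hD,
        mul_pos (by omega : (0:ℤ) < a) (by omega : (0:ℤ) < a),
        mul_pos (by omega : (0:ℤ) < b) (by omega : (0:ℤ) < b)]

/-- If `e` lies in the open cone generated by a direct acute basis `(f,g)`, then so does
any child of `e`. -/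
theorem child_in_cone (e f g : V) (hne : e ≠ 0) (hd : det2 f g = 1) (hac : 0 ≤ dot f g)
    (a b : ℤ) (ha : 1 ≤ a) (hb : 1 ≤ b) (he : e = a • f + b • g)
    (e' : V) (hc : IsParent e e') :
    ∃ a' b' : ℤ, 1 ≤ a' ∧ 1 ≤ b' ∧ e' = a' • f + b' • g := by
  obtain ⟨f1, f2⟩ := f
  obtain ⟨g1, g2⟩ := g
  obtain ⟨e1, e2⟩ := e
  obtain ⟨x1, x2⟩ := e'
  simp only [det2, dot] at hd hac
  have he1 : e1 = a * f1 + b * g1 := by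
    have := congrArg Prod.fst he; simpa using this
  have he2 : e2 = a * f2 + b * g2 := by
    have := congrArg Prod.snd he; simpa using this
  set α : ℤ := x1 * g2 - x2 * g1 with hα
  set β : ℤ := f1 * x2 - f2 * x1 with hβ
  have hx1 : x1 = α * f1 + β * g1 := by rw [hα, hβ]; linear_combination (-x1) * hd
  have hx2 : x2 = α * f2 + β * g2 := by rw [hα, hβ]; linear_combination (-x2) * hd
  have haa : a = e1 * g2 - e2 * g1 := by rw [he1, he2]; linear_combination (-a) * hd
  have hbb : b = f1 * e2 - f2 * e1 := by rw [he1, he2]; linear_combination (-b) * hd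
  have hNf : 1 ≤ f1 ^ 2 + f2 ^ 2 := by
    rcases eq_or_ne f1 0 with h | h
    · rcases eq_or_ne f2 0 with h' | h'
      · exfalso; rw [h, h'] at hd; simp at hd
      · have : 0 < f2 ^ 2 := by positivity
        nlinarith [sq_nonneg f1]
    · have : 0 < f1 ^ 2 := by positivity
      nlinarith [sq_nonneg f2]
  have hNg : 1 ≤ g1 ^ 2 + g2 ^ 2 := by
    rcases eq_or_ne g1 0 with h | h
    · rcases eq_or_ne g2 0 with h' | h'
      · exfalso; rw [h, h'] at hd; simp at hd
      · have : 0 < g2 ^ 2 := by positivity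
        nlinarith [sq_nonneg g1]
    · have : 0 < g1 ^ 2 := by positivity
      nlinarith [sq_nonneg g2]
  have heq1 : e1 * x1 + e2 * x2 =
      a * α * (f1 ^ 2 + f2 ^ 2) + b * β * (g1 ^ 2 + g2 ^ 2) +
        (a * β + b * α) * (f1 * g1 + f2 * g2) := by
    linear_combination x1 * he1 + x2 * he2 + (a * f1 + b * g1) * hx1 +
      (a * f2 + b * g2) * hx2
  have heq2 : e1 * e1 + e2 * e2 =
      a * a * (f1 ^ 2 + f2 ^ 2) + b * b * (g1 ^ 2 + g2 ^ 2) +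
        2 * a * b * (f1 * g1 + f2 * g2) := by
    linear_combination (e1 + a * f1 + b * g1) * he1 + (e2 + a * f2 + b * g2) * he2
  obtain ⟨⟨h1, h2⟩, hh | hh⟩ := hc
  · obtain ⟨hsum, hdet, hdot⟩ := hh
    simp only [det2, dot, Prod.mk_add_mk, Prod.mk.injEq] at hsum hdet hdot
    obtain ⟨hs1, hs2⟩ := hsum
    have hdet' : e1 * x2 - e2 * x1 = 1 := by
      rw [hs1, hs2]; linear_combination hdet
    have hdot' : 0 ≤ e1 * (x1 - e1) + e2 * (x2 - e2) := by
      rw [hs1, hs2]; linarith [hdot]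
    have hE : a * β - b * α = 1 := by
      linear_combination β * haa - α * hbb + (f1 * g2 - f2 * g1) * hdet' + hd
    have hH := key_cone (f1 ^ 2 + f2 ^ 2) (g1 ^ 2 + g2 ^ 2) (f1 * g1 + f2 * g2)
      a b α β 1 hNf hNg hac ha hb (Or.inl rfl) hE (by linarith)
    exact ⟨α, β, hH.1, hH.2, by
      simp only [Prod.ext_iff, Prod.smul_fst, Prod.smul_snd, Prod.fst_add, Prod.snd_add,
        smul_eq_mul]
      exact ⟨hx1, hx2⟩⟩
  · obtain ⟨hsum, hdet, hdot⟩ := hh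
    simp only [det2, dot, Prod.mk_add_mk, Prod.mk.injEq] at hsum hdet hdot
    obtain ⟨hs1, hs2⟩ := hsum
    have hdet' : e1 * x2 - e2 * x1 = -1 := by
      rw [hs1, hs2]; linear_combination -hdet
    have hdot' : 0 ≤ e1 * (x1 - e1) + e2 * (x2 - e2) := by
      rw [hs1, hs2]; linarith [hdot]
    have hE : a * β - b * α = -1 := by
      linear_combination β * haa - α * hbb + (f1 * g2 - f2 * g1) * hdet' - hd
    have hH := key_cone (f1 ^ 2 + f2 ^ 2) (g1 ^ 2 + g2 ^ 2) (f1 * g1 + f2 * g2)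
      a b α β (-1) hNf hNg hac ha hb (Or.inr rfl) hE (by linarith)
    exact ⟨α, β, hH.1, hH.2, by
      simp only [Prod.ext_iff, Prod.smul_fst, Prod.smul_snd, Prod.fst_add, Prod.snd_add,
        smul_eq_mul]
      exact ⟨hx1, hx2⟩⟩
end

section
/- The set of irreducible vectors in ℤ² has density 6/π²: the limit as n → ∞ of n⁻² · #{(i,j) ∈ {1,…,n}² : gcd(i,j) = 1} equals 6/π². -/
open Filter Finset ArithmeticFunction


open Filter Finset ArithmeticFunction
open scoped ArithmeticFunction.Moebius ArithmeticFunction.zeta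

lemma count_eq (n : ℕ) :
    ((((Finset.Icc 1 n ×ˢ Finset.Icc 1 n).filter fun p => Nat.gcd p.1 p.2 = 1).card : ℤ))
      = ∑ d ∈ Finset.Icc 1 n, μ d * ((n / d : ℕ) : ℤ) ^ 2 := by
  rw [Finset.card_filter]
  push_cast
  have key : ∀ p ∈ Finset.Icc 1 n ×ˢ Finset.Icc 1 n,
      (if Nat.gcd p.1 p.2 = 1 then (1:ℤ) else 0)
        = ∑ d ∈ Finset.Icc 1 n, if d ∣ p.1 ∧ d ∣ p.2 then μ d else 0 := by
    intro p hp
    simp only [Finset.mem_product, Finset.mem_Icc] at hp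
    have h1 : p.1 ≠ 0 := by omega
    have hfil : Finset.filter (fun d => d ∣ p.1 ∧ d ∣ p.2) (Finset.Icc 1 n)
        = (Nat.gcd p.1 p.2).divisors := by
      ext d
      simp only [Finset.mem_filter, Finset.mem_Icc, Nat.mem_divisors, Nat.dvd_gcd_iff]
      constructor
      · rintro ⟨⟨h1d, h2d⟩, hd⟩
        exact ⟨hd, Nat.gcd_ne_zero_left h1⟩
      · rintro ⟨⟨hd1, hd2⟩, -⟩
        have hd0 : d ≠ 0 := fun h => h1 (by simpa [h] using hd1)
        exact ⟨⟨Nat.one_le_iff_ne_zero.2 hd0, le_trans (Nat.le_of_dvd (by omega) hd1) hp.1.2⟩,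
          ⟨hd1, hd2⟩⟩
    rw [← Finset.sum_filter, hfil]
    have := congrArg (fun f : ArithmeticFunction ℤ => f (Nat.gcd p.1 p.2)) moebius_mul_coe_zeta
    simp only [mul_apply, one_apply] at this
    rw [Nat.sum_divisorsAntidiagonal (fun a b => μ a * (ζ:ArithmeticFunction ℤ) b)] at this
    rw [← this]
    refine Finset.sum_congr rfl fun a ha => ?_
    rw [Nat.mem_divisors] at ha
    have : (Nat.gcd p.1 p.2) / a ≠ 0 := Nat.div_ne_zero_iff_of_dvd ha.1 |>.mpr ⟨ha.2, fun h => by simp [h] at ha; exact ha.2 ha.1.1 ha.1.2⟩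
    simp [natCoe_apply, zeta_apply, this]
  rw [Finset.sum_congr rfl key, Finset.sum_comm]
  refine Finset.sum_congr rfl fun d hd => ?_
  rw [← Finset.sum_filter, Finset.filter_product, Finset.sum_const, nsmul_eq_mul, mul_comm]
  congr 1
  rw [Finset.card_product]
  have : ∀ m : ℕ, (Finset.filter (fun x => d ∣ x) (Finset.Icc 1 m)).card = m / d := by
    intro m
    rw [show Finset.Icc 1 m = Finset.Ioc 0 m from rfl]
    exact Nat.Ioc_filter_dvd_card_eq_div m d
  rw [this]; push_cast; ring




lemma mu_abs_le (d : ℕ) : ‖((μ d : ℤ) : ℝ)‖ ≤ 1 := by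
  rw [Int.norm_cast_real, Int.norm_eq_abs]
  exact_mod_cast abs_moebius_le_one

lemma summable_mu : Summable (fun d : ℕ => (μ d : ℝ) / (d : ℝ) ^ 2) := by
  apply Summable.of_norm_bounded (g := fun d : ℕ => 1 / (d:ℝ)^2)
    (Real.summable_one_div_nat_pow.mpr one_lt_two)
  intro d
  rw [norm_div, norm_pow, Real.norm_natCast]
  rcases eq_or_ne d 0 with rfl|hd
  · simp
  · exact div_le_div_of_nonneg_right (mu_abs_le d) (by positivity)

lemma tsum_mu : ∑' d : ℕ, (μ d : ℝ) / (d : ℝ) ^ 2 = 6 / Real.pi ^ 2 := by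
  have hpi : (Real.pi : ℝ) ≠ 0 := Real.pi_ne_zero
  have h2 : (1 : ℝ) < (2 : ℂ).re := by norm_num
  have hz : riemannZeta 2 = (Real.pi : ℂ) ^ 2 / 6 := riemannZeta_two
  have hmul := LSeries_zeta_mul_Lseries_moebius h2
  rw [LSeries_zeta_eq_riemannZeta h2, hz] at hmul
  have hL : LSeries (fun n => (μ n : ℂ)) 2 = 6 / (Real.pi : ℂ) ^ 2 := by
    have hπ : (Real.pi : ℂ) ≠ 0 := Complex.ofReal_ne_zero.mpr hpi
    field_simp at hmul ⊢
    linear_combination hmul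
  have hterm : ∀ d : ℕ, ((((μ d : ℝ) / (d : ℝ) ^ 2) : ℝ) : ℂ) = LSeries.term (fun n => (μ n : ℂ)) 2 d := by
    intro d
    rcases eq_or_ne d 0 with rfl|hd
    · simp [LSeries.term]
    · rw [LSeries.term_of_ne_zero hd]
      push_cast
      rw [Complex.cpow_ofNat]
  have : ((∑' d : ℕ, (μ d : ℝ) / (d : ℝ) ^ 2 : ℝ) : ℂ) = 6 / (Real.pi : ℂ) ^ 2 := by
    rw [Complex.ofReal_tsum]
    rw [tsum_congr hterm]
    exact hL
  rw [show (6/(Real.pi:ℂ)^2) = ((6/Real.pi^2 : ℝ):ℂ) by push_cast; ring] at this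
  exact_mod_cast this




noncomputable def F (n d : ℕ) : ℝ :=
  if d ∈ Finset.Icc 1 n then (μ d : ℝ) * ((n / d : ℕ) : ℝ) ^ 2 / (n : ℝ) ^ 2 else 0

lemma div_floor_le {n d : ℕ} (hd : 1 ≤ d) (hn : 1 ≤ n) :
    ((n / d : ℕ) : ℝ) / (n : ℝ) ≤ 1 / (d : ℝ) := by
  have hn0 : (0:ℝ) < n := by exact_mod_cast hn
  have hd0 : (0:ℝ) < d := by exact_mod_cast hd
  rw [div_le_div_iff₀ hn0 hd0]
  have : (n / d : ℕ) * d ≤ n := Nat.div_mul_le_self n d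
  calc ((n / d : ℕ) : ℝ) * d ≤ n := by exact_mod_cast this
    _ = 1 * n := (one_mul _).symm

lemma div_floor_ge {n d : ℕ} (hd : 1 ≤ d) (hn : 1 ≤ n) :
    1 / (d : ℝ) - 1 / (n : ℝ) ≤ ((n / d : ℕ) : ℝ) / (n : ℝ) := by
  have hn0 : (0:ℝ) < n := by exact_mod_cast hn
  have hd0 : (0:ℝ) < d := by exact_mod_cast hd
  rw [div_sub_div _ _ (ne_of_gt hd0) (ne_of_gt hn0), div_le_div_iff₀ (by positivity) hn0]
  have h : n < (n / d + 1) * d := by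
    have h1 := Nat.div_add_mod n d
    have h2 := Nat.mod_lt n hd
    calc n = d * (n/d) + n % d := h1.symm
      _ < d * (n/d) + d := by omega
      _ = (n/d+1)*d := by ring
  have h' : (n:ℝ) < ((n/d : ℕ) + 1) * d := by exact_mod_cast h
  nlinarith [hn0, hd0]

lemma tendsto_F (d : ℕ) :
    Tendsto (fun n => F n d) atTop (nhds ((μ d : ℝ) / (d : ℝ) ^ 2)) := by
  rcases Nat.eq_zero_or_pos d with rfl|hd
  · simpa [F] using tendsto_const_nhds
  have hq : Tendsto (fun n : ℕ => ((n / d : ℕ) : ℝ) / (n : ℝ)) atTop (nhds (1 / (d:ℝ))) := by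
    refine tendsto_of_tendsto_of_tendsto_of_le_of_le'
      (g := fun n : ℕ => 1 / (d:ℝ) - 1 / (n:ℝ)) (h := fun _ => 1 / (d:ℝ))
      ?_ tendsto_const_nhds ?_ ?_
    · simpa using tendsto_const_nhds.sub (tendsto_one_div_atTop_nhds_zero_nat (𝕜 := ℝ))
    · filter_upwards [eventually_ge_atTop 1] with n hn using div_floor_ge hd hn
    · filter_upwards [eventually_ge_atTop 1] with n hn using div_floor_le hd hn
  have h2 : Tendsto (fun n : ℕ => (μ d : ℝ) * (((n / d : ℕ) : ℝ) / (n : ℝ)) ^ 2) atTop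
      (nhds ((μ d : ℝ) * (1 / (d:ℝ)) ^ 2)) := (hq.pow 2).const_mul _
  have heq : (fun n : ℕ => (μ d : ℝ) * (((n / d : ℕ) : ℝ) / (n : ℝ)) ^ 2) =ᶠ[atTop]
      fun n => F n d := by
    filter_upwards [eventually_ge_atTop d, eventually_ge_atTop 1] with n hn hn1
    rw [F, if_pos (Finset.mem_Icc.mpr ⟨hd, hn⟩)]
    have hn0 : ((n:ℝ)) ≠ 0 := by positivity
    field_simp
  have := h2.congr' heq
  convert this using 2
  field_simp
lemma F_bound {n : ℕ} (hn : 1 ≤ n) (d : ℕ) : ‖F n d‖ ≤ 1 / (d : ℝ) ^ 2 := by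
  rw [F]
  split_ifs with h
  · rw [Finset.mem_Icc] at h
    have hd0 : (0:ℝ) < d := by exact_mod_cast h.1
    have hn0 : (0:ℝ) < n := by exact_mod_cast hn
    rw [norm_div, norm_mul, norm_pow, norm_pow, Real.norm_natCast, Real.norm_natCast]
    have h1 : ‖((μ d : ℤ) : ℝ)‖ ≤ 1 := by
      rw [Int.norm_cast_real, Int.norm_eq_abs]; exact_mod_cast abs_moebius_le_one
    have h2 : ((n / d : ℕ) : ℝ) ^ 2 / (n:ℝ) ^ 2 ≤ 1 / (d:ℝ) ^ 2 := by
      rw [← div_pow]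
      calc (((n / d : ℕ) : ℝ) / (n:ℝ)) ^ 2 ≤ (1/(d:ℝ)) ^ 2 :=
            pow_le_pow_left₀ (by positivity) (div_floor_le h.1 hn) 2
        _ = 1 / (d:ℝ)^2 := by ring
    calc ‖((μ d : ℤ) : ℝ)‖ * ((n / d : ℕ) : ℝ) ^ 2 / (n:ℝ) ^ 2
        ≤ 1 * ((n / d : ℕ) : ℝ) ^ 2 / (n:ℝ) ^ 2 := by gcongr
      _ = ((n / d : ℕ) : ℝ) ^ 2 / (n:ℝ) ^ 2 := by ring
      _ ≤ 1 / (d:ℝ) ^ 2 := h2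
  · rw [norm_zero]; positivity

open Filter in
/-- The set of irreducible vectors in `ℤ²` has density `6/π²`. -/
theorem density_coprime :
    Tendsto (fun n : ℕ =>
        (((Finset.Icc 1 n ×ˢ Finset.Icc 1 n).filter fun p => Nat.gcd p.1 p.2 = 1).card : ℝ)
          / (n : ℝ) ^ 2)
      atTop (nhds (6 / Real.pi ^ 2)) := by
  have hbound : Summable (fun d : ℕ => 1 / (d:ℝ)^2) :=
    Real.summable_one_div_nat_pow.mpr one_lt_two
  have hmain : Tendsto (fun n : ℕ => ∑' d : ℕ, F n d) atTop
      (nhds (∑' d : ℕ, (μ d : ℝ) / (d:ℝ)^2)) := by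
    refine tendsto_tsum_of_dominated_convergence hbound tendsto_F ?_
    filter_upwards [eventually_ge_atTop 1] with n hn d using F_bound hn d
  rw [tsum_mu] at hmain
  refine hmain.congr' ?_
  filter_upwards [eventually_ge_atTop 1] with n hn
  have hfin : ∑' d : ℕ, F n d = ∑ d ∈ Finset.Icc 1 n, F n d := by
    refine tsum_eq_sum fun d hd => ?_
    rw [F, if_neg hd]
  rw [hfin]
  have : ∑ d ∈ Finset.Icc 1 n, F n d
      = (∑ d ∈ Finset.Icc 1 n, (μ d : ℝ) * ((n / d : ℕ) : ℝ) ^ 2) / (n:ℝ)^2 := by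
    rw [Finset.sum_div]
    refine Finset.sum_congr rfl fun d hd => ?_
    rw [F, if_pos hd]
  rw [this]
  congr 1
  have := count_eq n
  have h2 := congrArg (fun z : ℤ => (z : ℝ)) this
  push_cast at h2
  exact h2.symm
end

section
/- Fix an irreducible e' ∈ ℤ² and a real r ≥ 1. Then the sum, over all e ∈ ℤ² with ‖e‖ ≤ r having e' as a parent, of 1/⟨e,e'⟩, is at most (2/‖e'‖²)·(1 + ln r). -/
lemma nsq_pos_of_irred {e : V} (h : Irred e) : 1 ≤ nsq e := by
  have hne : e.1 ≠ 0 ∨ e.2 ≠ 0 := by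
    by_contra hc
    push_neg at hc
    simp [Irred, hc.1, hc.2] at h
  unfold nsq
  rcases hne with h1 | h1
  · nlinarith [Int.one_le_abs h1, sq_abs e.1, sq_nonneg e.2, abs_nonneg e.1]
  · nlinarith [Int.one_le_abs h1, sq_abs e.2, sq_nonneg e.1, abs_nonneg e.2]

lemma exists_g0 (e' : V) (h : Irred e') : ∃ g₀ : V,
    det2 e' g₀ = 1 ∧ 0 ≤ dot e' g₀ ∧ dot e' g₀ < nsq e' := by
  have hN : 1 ≤ nsq e' := nsq_pos_of_irred h
  have hbez : e'.1 * Int.gcdA e'.1 e'.2 + e'.2 * Int.gcdB e'.1 e'.2 = 1 := by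
    have h2 := Int.gcd_eq_gcd_ab e'.1 e'.2
    rw [Irred] at h
    rw [h] at h2
    exact_mod_cast h2.symm
  set u := Int.gcdA e'.1 e'.2
  set v := Int.gcdB e'.1 e'.2
  set g : V := (-v, u) with hg
  have hdg : det2 e' g = 1 := by simp only [det2, hg]; linear_combination hbez
  set q : ℤ := dot e' g / nsq e' with hq
  refine ⟨(g.1 - q * e'.1, g.2 - q * e'.2), ?_, ?_, ?_⟩
  · simp only [det2] at hdg ⊢; linear_combination hdg
  · have : dot e' (g.1 - q * e'.1, g.2 - q * e'.2) = dot e' g % nsq e' := by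
      rw [Int.emod_def, ← hq]; simp only [dot, nsq]; ring
    rw [this]
    exact Int.emod_nonneg _ (by omega)
  · have : dot e' (g.1 - q * e'.1, g.2 - q * e'.2) = dot e' g % nsq e' := by
      rw [Int.emod_def, ← hq]; simp only [dot, nsq]; ring
    rw [this]
    exact Int.emod_lt_of_pos _ (by omega)

lemma det_eq_zero_imp {e' h : V} (hIr : Irred e') (hd : det2 e' h = 0) :
    ∃ t : ℤ, h = (t * e'.1, t * e'.2) := by
  have hbez : e'.1 * Int.gcdA e'.1 e'.2 + e'.2 * Int.gcdB e'.1 e'.2 = 1 := by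
    have h2 := Int.gcd_eq_gcd_ab e'.1 e'.2
    rw [Irred] at hIr
    rw [hIr] at h2
    exact_mod_cast h2.symm
  set u := Int.gcdA e'.1 e'.2
  set v := Int.gcdB e'.1 e'.2
  refine ⟨u * h.1 + v * h.2, ?_⟩
  simp only [det2] at hd
  have h1 : h.1 = (u * h.1 + v * h.2) * e'.1 := by linear_combination (-h.1) * hbez - v * hd
  have h2 : h.2 = (u * h.1 + v * h.2) * e'.2 := by linear_combination (-h.2) * hbez + u * hd
  exact Prod.ext h1 h2

lemma cs_int (a b : V) : dot a b ^ 2 ≤ nsq a * nsq b := by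
  simp only [dot, nsq]; nlinarith [sq_nonneg (a.1 * b.2 - a.2 * b.1)]

/-- Index map: two families of children of `e'`. -/
def iota (e' g₀ : V) (s : ℤ) (p : Bool × ℕ) : V :=
  if p.1 then (-g₀.1 + ((p.2 : ℤ) + s) * e'.1, -g₀.2 + ((p.2 : ℤ) + s) * e'.2)
  else (g₀.1 + (p.2 : ℤ) * e'.1, g₀.2 + (p.2 : ℤ) * e'.2)

lemma dot_iota (e' g₀ : V) (s : ℤ) (p : Bool × ℕ) :
    dot (iota e' g₀ s p) e' =
      if p.1 then ((p.2 : ℤ) + s) * nsq e' - dot e' g₀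
      else (p.2 : ℤ) * nsq e' + dot e' g₀ := by
  obtain ⟨b, k⟩ := p
  cases b <;> simp only [iota, dot, nsq, if_true, if_false, Bool.false_eq_true] <;> ring

lemma iota_inj (e' g₀ : V) (s : ℤ) (hdet : det2 e' g₀ = 1) :
    Function.Injective (iota e' g₀ s) := by
  have hne : e'.1 ≠ 0 ∨ e'.2 ≠ 0 := by
    by_contra hc
    push_neg at hc
    simp [det2, hc.1, hc.2] at hdet
  rintro ⟨b1, k1⟩ ⟨b2, k2⟩ h
  simp only [det2] at hdet
  cases b1 <;> cases b2 <;>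
    simp only [iota, if_true, if_false, Bool.false_eq_true, Prod.mk.injEq] at h
  · obtain ⟨h1, h2⟩ := h
    have hk : (k1 : ℤ) = k2 := by
      rcases hne with h' | h'
      · have : (k1 : ℤ) * e'.1 = k2 * e'.1 := by linarith
        exact mul_right_cancel₀ h' this
      · have : (k1 : ℤ) * e'.2 = k2 * e'.2 := by linarith
        exact mul_right_cancel₀ h' this
    simp only [Prod.mk.injEq]
    exact ⟨trivial, by exact_mod_cast hk⟩
  · exfalso
    obtain ⟨h1, h2⟩ := h
    have : (2 : ℤ) = 0 := by linear_combination -2 * hdet - e'.2 * h1 + e'.1 * h2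
    norm_num at this
  · exfalso
    obtain ⟨h1, h2⟩ := h
    have : (2 : ℤ) = 0 := by linear_combination -2 * hdet + e'.2 * h1 - e'.1 * h2
    norm_num at this
  · obtain ⟨h1, h2⟩ := h
    have hk : (k1 : ℤ) = k2 := by
      rcases hne with h' | h'
      · have : ((k1 : ℤ) + s) * e'.1 = ((k2 : ℤ) + s) * e'.1 := by linarith
        have := mul_right_cancel₀ h' this
        omega
      · have : ((k1 : ℤ) + s) * e'.2 = ((k2 : ℤ) + s) * e'.2 := by linarith
        have := mul_right_cancel₀ h' this
        omega
    simp only [Prod.mk.injEq]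
    exact ⟨trivial, by exact_mod_cast hk⟩

lemma classify (e' : V) (he' : Irred e') (g₀ : V) (hdet : det2 e' g₀ = 1)
    (hd0 : 0 ≤ dot e' g₀) (hdN : dot e' g₀ < nsq e') (s : ℤ)
    (hs : s = if dot e' g₀ = 0 then 0 else 1)
    (e : V) (he : IsParent e' e) :
    ∃ (b : Bool) (k : ℕ), 1 ≤ k ∧ e = iota e' g₀ s (b, k) := by
  have hN : 1 ≤ nsq e' := nsq_pos_of_irred he'
  obtain ⟨g, hg⟩ := he
  have hcases : e = e' + g ∧ 0 ≤ dot e' g ∧ (det2 e' g = 1 ∨ det2 e' g = -1) := by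
    rcases hg with ⟨hsum, hde, hdo⟩ | ⟨hsum, hde, hdo⟩
    · exact ⟨hsum, hdo, Or.inl hde⟩
    · refine ⟨by rw [hsum, add_comm], ?_, Or.inr ?_⟩
      · simp only [dot] at hdo ⊢; linarith
      · simp only [det2] at hde ⊢; linarith
  obtain ⟨hsum, hdo, heps⟩ := hcases
  rcases heps with hde | hde
  · -- det2 e' g = 1 : g = g₀ + t e'
    have h0 : det2 e' (g.1 - g₀.1, g.2 - g₀.2) = 0 := by
      simp only [det2] at hde hdet ⊢; linarith
    obtain ⟨t, ht⟩ := det_eq_zero_imp he' h0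
    have ht1 : g.1 - g₀.1 = t * e'.1 := congrArg Prod.fst ht
    have ht2 : g.2 - g₀.2 = t * e'.2 := congrArg Prod.snd ht
    have hdg : dot e' g = dot e' g₀ + t * nsq e' := by
      simp only [dot, nsq]; linear_combination e'.1 * ht1 + e'.2 * ht2
    have htnn : 0 ≤ t := by
      by_contra hc
      push_neg at hc
      have : t * nsq e' ≤ -1 * nsq e' :=
        mul_le_mul_of_nonneg_right (by omega) (by omega)
      omega
    refine ⟨false, (t + 1).toNat, by omega, ?_⟩
    have hkz : ((t + 1).toNat : ℤ) = t + 1 := Int.toNat_of_nonneg (by omega)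
    simp only [iota, Bool.false_eq_true, if_false]
    rw [hsum, Prod.ext_iff]
    constructor
    · show e'.1 + g.1 = _
      rw [hkz]; linear_combination ht1
    · show e'.2 + g.2 = _
      rw [hkz]; linear_combination ht2
  · -- det2 e' g = -1 : g = -g₀ + t e'
    have h0 : det2 e' (g.1 + g₀.1, g.2 + g₀.2) = 0 := by
      simp only [det2] at hde hdet ⊢; linarith
    obtain ⟨t, ht⟩ := det_eq_zero_imp he' h0
    have ht1 : g.1 + g₀.1 = t * e'.1 := congrArg Prod.fst ht
    have ht2 : g.2 + g₀.2 = t * e'.2 := congrArg Prod.snd ht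
    have hdg : dot e' g = -dot e' g₀ + t * nsq e' := by
      simp only [dot, nsq]; linear_combination e'.1 * ht1 + e'.2 * ht2
    have htnn : 0 ≤ t := by
      by_contra hc
      push_neg at hc
      have : t * nsq e' ≤ -1 * nsq e' :=
        mul_le_mul_of_nonneg_right (by omega) (by omega)
      omega
    have hts : 1 ≤ t + 1 - s := by
      by_cases hd : dot e' g₀ = 0
      · simp only [hs, if_pos hd]; omega
      · simp only [hs, if_neg hd]
        have hd' : 0 < dot e' g₀ := lt_of_le_of_ne hd0 (Ne.symm hd)
        have : 1 ≤ t := by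
          by_contra hc
          push_neg at hc
          have ht0 : t = 0 := by omega
          rw [ht0] at hdg; omega
        omega
    refine ⟨true, (t + 1 - s).toNat, by omega, ?_⟩
    have hkz : ((t + 1 - s).toNat : ℤ) = t + 1 - s := Int.toNat_of_nonneg (by omega)
    simp only [iota, if_true]
    rw [hsum, Prod.ext_iff]
    constructor
    · show e'.1 + g.1 = _
      rw [hkz]; linear_combination ht1
    · show e'.2 + g.2 = _
      rw [hkz]; linear_combination ht2

lemma harm_bound (n : ℕ) : ∑ k ∈ Finset.Icc 1 n, ((k : ℝ))⁻¹ ≤ 1 + Real.log n := by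
  have h := harmonic_le_one_add_log n
  rw [harmonic_eq_sum_Icc] at h
  push_cast at h
  exact h


/-- The sum of `1/⟨e,e'⟩` over the children `e` of `e'` with `‖e‖ ≤ r` is at most
`(2/‖e'‖²)(1 + ln r)`. -/
theorem children_sum_bound (e' : V) (he' : Irred e') (r : ℝ) (hr : 1 ≤ r) :
    ∑ᶠ e ∈ {e : V | Real.sqrt ((nsq e : ℝ)) ≤ r ∧ IsParent e' e},
        (1 : ℝ) / ((dot e e' : ℤ) : ℝ)
      ≤ 2 / ((nsq e' : ℤ) : ℝ) * (1 + Real.log r) := by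
  obtain ⟨g₀, hdet, hd0, hdN⟩ := exists_g0 e' he'
  have hN : 1 ≤ nsq e' := nsq_pos_of_irred he'
  set s : ℤ := if dot e' g₀ = 0 then 0 else 1 with hs
  set n : ℕ := ⌊r⌋₊ with hn
  have hr0 : (0:ℝ) ≤ r := le_trans zero_le_one hr
  have hn1 : 1 ≤ n := Nat.le_floor (by exact_mod_cast hr)
  set ι := iota e' g₀ s with hι
  set S : Set V := {e : V | Real.sqrt ((nsq e : ℤ) : ℝ) ≤ r ∧ IsParent e' e} with hSdef
  set T : Finset (Bool × ℕ) := Finset.univ ×ˢ Finset.Icc 1 n with hT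
  -- dot lower bound
  have hdotge : ∀ b : Bool, ∀ k : ℕ, 1 ≤ k → (k : ℤ) * nsq e' ≤ dot (ι (b, k)) e' := by
    intro b k hk
    rw [hι, dot_iota]
    cases b
    · simp only [Bool.false_eq_true, if_false]; linarith
    · simp only [if_true]
      by_cases hd : dot e' g₀ = 0
      · have hs0 : s = 0 := by rw [hs, if_pos hd]
        rw [hs0, hd]
        linarith [le_refl ((k:ℤ) * nsq e')]
      · have hs1 : s = 1 := by rw [hs, if_neg hd]
        rw [hs1]; nlinarith [hdN]
  have hdotpos : ∀ b : Bool, ∀ k : ℕ, 1 ≤ k → 0 < dot (ι (b, k)) e' := by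
    intro b k hk
    have h1 := hdotge b k hk
    have : (1 : ℤ) ≤ (k : ℤ) * nsq e' := by
      have : (1 : ℤ) ≤ (k : ℤ) := by exact_mod_cast hk
      nlinarith
    omega
  -- classification into T
  have hclass : ∀ e ∈ S, ∃ p ∈ T, e = ι p := by
    intro e heS
    obtain ⟨hsq, hpar⟩ := heS
    obtain ⟨b, k, hk1, heq⟩ := classify e' he' g₀ hdet hd0 hdN s hs e hpar
    refine ⟨(b, k), ?_, heq⟩
    rw [hT, Finset.mem_product]
    refine ⟨Finset.mem_univ _, Finset.mem_Icc.mpr ⟨hk1, ?_⟩⟩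
    -- k ≤ n
    have hnsq0 : (0:ℤ) ≤ nsq e := by unfold nsq; positivity
    have hnsqr : ((nsq e : ℤ) : ℝ) ≤ r ^ 2 := by
      have h1 : Real.sqrt ((nsq e : ℤ) : ℝ) ^ 2 = ((nsq e : ℤ) : ℝ) :=
        Real.sq_sqrt (by exact_mod_cast hnsq0)
      nlinarith [Real.sqrt_nonneg ((nsq e : ℤ) : ℝ)]
    have hle : (k : ℤ) * nsq e' ≤ dot e e' := by rw [heq]; exact hdotge b k hk1
    have hcs := cs_int e e'
    have hkr : (k : ℝ) ≤ r := by
      have hleR : (k : ℝ) * ((nsq e' : ℤ) : ℝ) ≤ ((dot e e' : ℤ) : ℝ) := by exact_mod_cast hle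
      have hcsR : ((dot e e' : ℤ) : ℝ) ^ 2 ≤ ((nsq e : ℤ) : ℝ) * ((nsq e' : ℤ) : ℝ) := by
        exact_mod_cast hcs
      have hNR : (1 : ℝ) ≤ ((nsq e' : ℤ) : ℝ) := by exact_mod_cast hN
      have hkR : (1 : ℝ) ≤ (k : ℝ) := by exact_mod_cast hk1
      have hNR0 : (0 : ℝ) ≤ ((nsq e' : ℤ) : ℝ) := by linarith
      have hdotnn : (0:ℝ) ≤ ((dot e e' : ℤ) : ℝ) := le_trans (by nlinarith) hleR
      have hsq1 : ((k : ℝ) * ((nsq e' : ℤ) : ℝ)) ^ 2 ≤ ((dot e e' : ℤ) : ℝ) ^ 2 :=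
        pow_le_pow_left₀ (mul_nonneg (Nat.cast_nonneg k) hNR0) hleR 2
      have h3 : ((k : ℝ) * ((nsq e' : ℤ) : ℝ)) ^ 2 ≤ (r * ((nsq e' : ℤ) : ℝ)) ^ 2 := by
        nlinarith [mul_nonneg (mul_nonneg (sq_nonneg r) hNR0) (by linarith : (0:ℝ) ≤ ((nsq e' : ℤ) : ℝ) - 1)]
      have h4 : (k : ℝ) * ((nsq e' : ℤ) : ℝ) ≤ r * ((nsq e' : ℤ) : ℝ) := by
        nlinarith [mul_nonneg (le_trans zero_le_one hkR) hNR0, mul_nonneg hr0 hNR0]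
      have hNpos : (0:ℝ) < ((nsq e' : ℤ) : ℝ) := by linarith
      exact le_of_mul_le_mul_right h4 hNpos
    exact Nat.le_floor hkr
  have hSsub : S ⊆ ↑(T.image ι) := by
    intro e heS
    obtain ⟨p, hpT, hpe⟩ := hclass e heS
    exact Finset.mem_coe.mpr (Finset.mem_image.mpr ⟨p, hpT, hpe.symm⟩)
  have hfin : S.Finite := Set.Finite.subset (T.image ι).finite_toSet hSsub
  rw [finsum_mem_eq_finite_toFinset_sum _ hfin]
  have hinj : Function.Injective ι := iota_inj e' g₀ s hdet
  have hNR : (1 : ℝ) ≤ ((nsq e' : ℤ) : ℝ) := by exact_mod_cast hN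
  calc ∑ e ∈ hfin.toFinset, (1 : ℝ) / ((dot e e' : ℤ) : ℝ)
      ≤ ∑ e ∈ T.image ι, (1 : ℝ) / ((dot e e' : ℤ) : ℝ) := by
        apply Finset.sum_le_sum_of_subset_of_nonneg
        · exact Set.Finite.toFinset_subset.mpr hSsub
        · intro e heim _
          obtain ⟨p, hpT, hpe⟩ := Finset.mem_image.mp heim
          rw [hT, Finset.mem_product, Finset.mem_Icc] at hpT
          have := hdotpos p.1 p.2 hpT.2.1
          rw [← hpe]
          apply one_div_nonneg.mpr
          have : (0:ℝ) < ((dot (ι (p.1, p.2)) e' : ℤ) : ℝ) := by exact_mod_cast this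
          simpa using this.le
    _ = ∑ p ∈ T, (1 : ℝ) / ((dot (ι p) e' : ℤ) : ℝ) := by
        rw [Finset.sum_image (fun p _ q _ h => hinj h)]
    _ ≤ ∑ p ∈ T, (1 : ℝ) / ((p.2 : ℝ) * ((nsq e' : ℤ) : ℝ)) := by
        apply Finset.sum_le_sum
        intro p hpT
        rw [hT, Finset.mem_product, Finset.mem_Icc] at hpT
        have hk1 := hpT.2.1
        have hposk : (0:ℝ) < (p.2 : ℝ) * ((nsq e' : ℤ) : ℝ) := by
          have : (1:ℝ) ≤ (p.2:ℝ) := by exact_mod_cast hk1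
          nlinarith
        apply one_div_le_one_div_of_le hposk
        have := hdotge p.1 p.2 hk1
        have h2 : ((p.2 : ℤ) * nsq e' : ℤ) ≤ dot (ι (p.1, p.2)) e' := this
        calc (p.2 : ℝ) * ((nsq e' : ℤ) : ℝ) = (((p.2 : ℤ) * nsq e' : ℤ) : ℝ) := by push_cast; ring
          _ ≤ ((dot (ι (p.1, p.2)) e' : ℤ) : ℝ) := by exact_mod_cast h2
          _ = ((dot (ι p) e' : ℤ) : ℝ) := by rw [Prod.mk.eta]
    _ = 2 * ∑ k ∈ Finset.Icc 1 n, (1 : ℝ) / ((k : ℝ) * ((nsq e' : ℤ) : ℝ)) := by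
        rw [hT, Finset.sum_product, Fintype.sum_bool, two_mul]
    _ = 2 / ((nsq e' : ℤ) : ℝ) * ∑ k ∈ Finset.Icc 1 n, ((k : ℝ))⁻¹ := by
        rw [Finset.mul_sum, Finset.mul_sum]
        apply Finset.sum_congr rfl
        intro k _
        field_simp
    _ ≤ 2 / ((nsq e' : ℤ) : ℝ) * (1 + Real.log n) := by
        apply mul_le_mul_of_nonneg_left (harm_bound n)
        positivity
    _ ≤ 2 / ((nsq e' : ℤ) : ℝ) * (1 + Real.log r) := by
        apply mul_le_mul_of_nonneg_left _ (by positivity)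
        have h1 : (0:ℝ) < n := by exact_mod_cast hn1
        have h2 : (n : ℝ) ≤ r := Nat.floor_le hr0
        linarith [Real.log_le_log h1 h2]
end

section
/- Let u : ℤ² → ℝ be defined by u(1,1) = 1, u(−1,0) = u(0,−1) = −1, and u(x) = 2‖x‖² for all other x ∈ ℤ². Then for all x ∈ ℤ² and all irreducible e ∈ ℤ², one has u(x+e) − 2u(x) + u(x−e) ≥ 1; yet u(1,1) + u(0,−1) + u(−1,0) − 3u(0,0) = −1. -/
/-- A directionally convex function on `ℤ²` which is not convex. -/
noncomputable def u18 : V → ℝ := fun x =>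
  if x = (1, 1) then 1
  else if x = (-1, 0) then -1
  else if x = (0, -1) then -1
  else 2 * (nsq x : ℝ)

noncomputable def d18 (x : V) : ℝ :=
  if x = (1, 1) ∨ x = (-1, 0) ∨ x = (0, -1) then -3 else 0

lemma u18_eq (x : V) : u18 x = 2 * (nsq x : ℝ) + d18 x := by
  by_cases h1 : x = (1, 1)
  · subst h1; norm_num [u18, d18, nsq]
  · by_cases h2 : x = (-1, 0)
    · subst h2; norm_num [u18, d18, nsq]
    · by_cases h3 : x = (0, -1)
      · subst h3; norm_num [u18, d18, nsq]
      · have h4 : ¬(x = (1, 1) ∨ x = (-1, 0) ∨ x = (0, -1)) := by tauto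
        simp only [u18, d18, if_neg h1, if_neg h2, if_neg h3, if_neg h4]
        ring

lemma d18_nonpos (x : V) : d18 x ≤ 0 := by
  unfold d18; split_ifs <;> norm_num

lemma nsq_par (x e : V) : nsq (x + e) + nsq (x - e) = 2 * nsq x + 2 * nsq e := by
  obtain ⟨a, b⟩ := x; obtain ⟨c, f⟩ := e
  simp [nsq, Prod.mk_add_mk, Prod.mk_sub_mk]
  ring

lemma d18_sum (x e : V) (he : e ≠ 0) : -3 ≤ d18 (x + e) + d18 (x - e) := by
  unfold d18
  split_ifs with h1 h2 <;> try norm_num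
  exfalso
  obtain ⟨a, b⟩ := x; obtain ⟨c, f⟩ := e
  simp only [Prod.mk_add_mk, Prod.mk_sub_mk, Prod.mk.injEq, Prod.ext_iff,
    Prod.fst_zero, Prod.snd_zero] at h1 h2 he
  have he' : ¬(c = 0 ∧ f = 0) := by simpa [Prod.ext_iff] using he
  omega

lemma one_le_nsq (e : V) (h : Irred e) : 1 ≤ nsq e := by
  obtain ⟨a, b⟩ := e
  simp only [Irred] at h
  simp only [nsq]
  by_contra h'
  push_neg at h'
  have ha : a = 0 ∧ b = 0 := by
    constructor <;> nlinarith [sq_nonneg a, sq_nonneg b]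
  rw [ha.1, ha.2] at h
  simp at h

/-- All segment forms of `u18` are at least `1`, yet the triangle form
`T_0^{(1,1)}` takes the value `-1`. -/
theorem directional_not_convex :
    (∀ x e : V, Irred e → 1 ≤ u18 (x + e) - 2 * u18 x + u18 (x - e)) ∧
    u18 (1, 1) + u18 (0, -1) + u18 (-1, 0) - 3 * u18 (0, 0) = -1 := by

  constructor
  · intro x e he
    have hne : e ≠ 0 := by
      intro h0
      rw [h0] at he
      simp [Irred] at he
    have h1 := u18_eq (x + e)
    have h2 := u18_eq x
    have h3 := u18_eq (x - e)
    have hn : (nsq (x + e) : ℝ) + nsq (x - e) = 2 * nsq x + 2 * nsq e := by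
      exact_mod_cast congrArg (fun z : ℤ => (z : ℝ)) (nsq_par x e)
    have hd := d18_sum x e hne
    have hd0 := d18_nonpos x
    have hq : (1 : ℝ) ≤ (nsq e : ℝ) := by exact_mod_cast one_le_nsq e he
    rw [h1, h2, h3]
    linarith
  · norm_num [u18, nsq, Prod.ext_iff]
end

section
/- Let X = Ω ∩ ℤ² for a convex set Ω ⊂ ℝ², and suppose u : X → ℝ satisfies u(x+e) − 2u(x) + u(x−e) ≥ 0 for every x ∈ X and irreducible e ∈ ℤ² with x ± e ∈ X. Then the restriction of u to X' = X ∩ 2ℤ² is the restriction of a convex function, i.e. for every x ∈ X' and irreducible e with ‖e‖ > 1 of parents f, g such that x+2e, x−2f, x−2g ∈ X', one has u(x+2e) + u(x−2f) + u(x−2g) − 3u(x) ≥ 0, and for every irreducible e with x ± 2e ∈ X', u(x+2e) − 2u(x) + u(x−2e) ≥ 0. -/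
lemma irred_of_det_one (v w : V) (h : det2 v w = 1) : Irred v := by
  have hd : (Int.gcd v.1 v.2 : ℤ) ∣ 1 := by
    rw [← h]
    unfold det2
    exact dvd_sub (Dvd.dvd.mul_right (Int.gcd_dvd_left _ _) _)
      (Dvd.dvd.mul_right (Int.gcd_dvd_right _ _) _)
  have := Int.eq_one_of_dvd_one (by positivity) hd
  exact_mod_cast this

/-- If `u` is directionally convex on `X = Ω ∩ ℤ²`, then its restriction to the coarsened
grid `X ∩ 2ℤ²` satisfies all triangle and segment inequalities, hence is convex. -/
theorem coarse_grid_convex (Ω : Set (ℝ × ℝ)) (hΩ : Convex ℝ Ω)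
    (X : Set V) (hX : X = {v | toR v ∈ Ω})
    (u : V → ℝ)
    (hdc : ∀ x ∈ X, ∀ e : V, Irred e → x + e ∈ X → x - e ∈ X →
      0 ≤ u (x + e) - 2 * u x + u (x - e)) :
    (∀ x ∈ X, 2 ∣ x.1 → 2 ∣ x.2 →
      ∀ e f g : V, Irred e → 1 < nsq e → IsParents f g e →
        x + (2 : ℤ) • e ∈ X → x - (2 : ℤ) • f ∈ X → x - (2 : ℤ) • g ∈ X →
        0 ≤ u (x + (2 : ℤ) • e) + u (x - (2 : ℤ) • f) + u (x - (2 : ℤ) • g) - 3 * u x) ∧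
    (∀ x ∈ X, 2 ∣ x.1 → 2 ∣ x.2 →
      ∀ e : V, Irred e → x + (2 : ℤ) • e ∈ X → x - (2 : ℤ) • e ∈ X →
        0 ≤ u (x + (2 : ℤ) • e) - 2 * u x + u (x - (2 : ℤ) • e)) := by
  have mid : ∀ a b m : V, a ∈ X → b ∈ X → a + b = (2:ℤ) • m → m ∈ X := by
    intro a b m ha hb hm
    rw [hX] at ha hb ⊢
    have h1 : a.1 + b.1 = 2 * m.1 := by
      have := congrArg Prod.fst hm; simp [two_smul] at this; linarith
    have h2 : a.2 + b.2 = 2 * m.2 := by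
      have := congrArg Prod.snd hm; simp [two_smul] at this; linarith
    have key : toR m = (1/2 : ℝ) • toR a + (1/2 : ℝ) • toR b := by
      simp only [toR, Prod.ext_iff, Prod.smul_fst, Prod.smul_snd, Prod.fst_add,
        Prod.snd_add, smul_eq_mul]
      constructor
      · have : (a.1:ℝ) + b.1 = 2 * m.1 := by exact_mod_cast h1
        linarith
      · have : (a.2:ℝ) + b.2 = 2 * m.2 := by exact_mod_cast h2
        linarith
    have := hΩ ha hb (by norm_num : (0:ℝ) ≤ 1/2) (by norm_num : (0:ℝ) ≤ 1/2)
      (by norm_num : (1:ℝ)/2 + 1/2 = 1)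
    simpa [key] using this
  constructor
  · intro x hx _ _ e f g he _ hpar hA hB hC
    obtain ⟨hef, hdet, -⟩ := hpar
    subst hef
    have hfg : Irred (f - g) := by
      apply irred_of_det_one (f - g) g
      simp only [det2, Prod.fst_sub, Prod.snd_sub] at hdet ⊢
      ring_nf
      ring_nf at hdet
      linarith
    have hxe : x + (f + g) ∈ X :=
      mid x (x + (2:ℤ) • (f + g)) _ hx hA (by rw [two_smul, two_smul]; abel)
    have hxme : x - (f + g) ∈ X :=
      mid (x - (2:ℤ) • f) (x - (2:ℤ) • g) _ hB hC (by rw [two_smul, two_smul, two_smul]; abel)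
    have e1 : x + (f + g) + (f + g) = x + (2:ℤ) • (f + g) := by rw [two_smul]; abel
    have e2 : x + (f + g) - (f + g) = x := by abel
    have e3 : x - (f + g) + (f - g) = x - (2:ℤ) • g := by rw [two_smul]; abel
    have e4 : x - (f + g) - (f - g) = x - (2:ℤ) • f := by rw [two_smul]; abel
    have h1 := hdc (x + (f + g)) hxe (f + g) he (by rw [e1]; exact hA) (by rw [e2]; exact hx)
    have h2 := hdc x hx (f + g) he hxe hxme
    have h3 := hdc (x - (f + g)) hxme (f - g) hfg (by rw [e3]; exact hC) (by rw [e4]; exact hB)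
    rw [e1, e2] at h1
    rw [e3, e4] at h3
    linarith
  · intro x hx _ _ e he hA hB
    have hxe : x + e ∈ X :=
      mid x (x + (2:ℤ) • e) _ hx hA (by rw [two_smul, two_smul]; abel)
    have hxme : x - e ∈ X :=
      mid (x - (2:ℤ) • e) x _ hB hx (by rw [two_smul, two_smul]; abel)
    have e1 : x + e + e = x + (2:ℤ) • e := by rw [two_smul]; abel
    have e2 : x + e - e = x := by abel
    have e3 : x - e + e = x := by abel
    have e4 : x - e - e = x - (2:ℤ) • e := by rw [two_smul]; abel
    have h1 := hdc (x + e) hxe e he (by rw [e1]; exact hA) (by rw [e2]; exact hx)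
    have h2 := hdc x hx e he hxe hxme
    have h3 := hdc (x - e) hxme e he (by rw [e3]; exact hx) (by rw [e4]; exact hB)
    rw [e1, e2] at h1
    rw [e3, e4] at h3
    linarith
end
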